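/- arXiv:1802.03092 — 10 statements merged into one kernel-verified Lean document; each statement's English description precedes it below -/
import Mathlib

section
/- Let d ≥ 2 and let G be a finite simple graph with maximum degree at most d − 1. Then G is realizable on the sphere 𝕊^{d−1} of radius 1/√2 in ℝ^d. -/
/-- A graph `G` is realizable on the sphere `𝕊^{d-1}` of radius `1/√2` in `ℝ^d` if there is an
injective map from its vertices to `EuclideanSpace ℝ (Fin d)` with all images of norm `1/√2`,
sending adjacent vertices to points at distance `1`. -/
def SphereRealizable {V : Type*} (G : SimpleGraph V) (d : ℕ) : Prop :=
  ∃ f : V → EuclideanSpace ℝ (Fin d), Function.Injective f ∧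
    (∀ v : V, ‖f v‖ = 1 / Real.sqrt 2) ∧
    ∀ u v : V, G.Adj u v → dist (f u) (f v) = 1

noncomputable section
namespace SphereRealAux
open Real Module Submodule

variable {d : ℕ}

abbrev Euc (d : ℕ) := EuclideanSpace ℝ (Fin d)

lemma norm_eq_one_of_inner (x : Euc d) (h : (inner ℝ x x : ℝ) = 1) : ‖x‖ = 1 := by
  have := real_inner_self_eq_norm_sq x
  nlinarith [norm_nonneg x]

lemma infinite_unit (W : Submodule ℝ (Euc d)) (hW : 2 ≤ finrank ℝ W) :
    {x : Euc d | x ∈ W ∧ ‖x‖ = 1}.Infinite := by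
  have b := stdOrthonormalBasis ℝ W
  have h0 : 0 < finrank ℝ W := by omega
  have h1 : 1 < finrank ℝ W := by omega
  set i0 : Fin (finrank ℝ W) := ⟨0, h0⟩
  set i1 : Fin (finrank ℝ W) := ⟨1, h1⟩
  set e1 : Euc d := (b i0 : Euc d)
  set e2 : Euc d := (b i1 : Euc d)
  have he1W : e1 ∈ W := (b i0).2
  have he2W : e2 ∈ W := (b i1).2
  have horth := b.orthonormal
  have h11 : (inner ℝ e1 e1 : ℝ) = 1 := by
    have := horth.1 i0
    have h2 : (inner ℝ (b i0) (b i0) : ℝ) = ‖b i0‖^2 := real_inner_self_eq_norm_sq _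
    rw [this] at h2
    have : (inner ℝ e1 e1 : ℝ) = (inner ℝ (b i0) (b i0) : ℝ) := rfl
    rw [this, h2]; norm_num
  have h22 : (inner ℝ e2 e2 : ℝ) = 1 := by
    have := horth.1 i1
    have h2 : (inner ℝ (b i1) (b i1) : ℝ) = ‖b i1‖^2 := real_inner_self_eq_norm_sq _
    rw [this] at h2
    have : (inner ℝ e2 e2 : ℝ) = (inner ℝ (b i1) (b i1) : ℝ) := rfl
    rw [this, h2]; norm_num
  have h12 : (inner ℝ e1 e2 : ℝ) = 0 := by
    have := horth.2 (i := i0) (j := i1) (by simp [i0, i1, Fin.ext_iff])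
    exact this
  have h21 : (inner ℝ e2 e1 : ℝ) = 0 := by rw [real_inner_comm]; exact h12
  set φ : ℝ → Euc d := fun θ => Real.cos θ • e1 + Real.sin θ • e2 with hφ
  have hinner1 : ∀ θ, (inner ℝ e1 (φ θ) : ℝ) = Real.cos θ := by
    intro θ
    simp only [hφ, inner_add_right, real_inner_smul_right, h11, h12]
    ring
  have hmem : ∀ θ, φ θ ∈ {x : Euc d | x ∈ W ∧ ‖x‖ = 1} := by
    intro θ
    constructor
    · exact W.add_mem (W.smul_mem _ he1W) (W.smul_mem _ he2W)
    · apply norm_eq_one_of_inner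
      have : (inner ℝ (φ θ) (φ θ) : ℝ) =
          Real.cos θ * Real.cos θ + Real.sin θ * Real.sin θ := by
        simp only [hφ, inner_add_left, inner_add_right, real_inner_smul_left,
          real_inner_smul_right, h11, h22, h12, h21]
        ring
      rw [this]
      nlinarith [Real.sin_sq_add_cos_sq θ]
  have hinj : Set.InjOn φ (Set.Icc 0 π) := by
    intro a ha b hb hab
    apply Real.injOn_cos ha hb
    rw [← hinner1 a, ← hinner1 b, hab]
  have hIcc : (Set.Icc (0:ℝ) π).Infinite := Set.Icc_infinite Real.pi_pos
  exact (hIcc.image hinj).mono (by rintro x ⟨θ, hθ, rfl⟩; exact hmem θ)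

lemma exists_unit_orth_avoid (T : Finset (Euc d))
    (hT : finrank ℝ (span ℝ (T : Set (Euc d))) + 2 ≤ d) (B : Set (Euc d)) (hB : B.Finite) :
    ∃ x : Euc d, ‖x‖ = 1 ∧ (∀ y ∈ T, (inner ℝ y x : ℝ) = 0) ∧ x ∉ B := by
  set K := span ℝ (T : Set (Euc d))
  have hrk : finrank ℝ K + finrank ℝ Kᗮ = d := by
    rw [Submodule.finrank_add_finrank_orthogonal, finrank_euclideanSpace_fin]
  have h2 : 2 ≤ finrank ℝ Kᗮ := by omega
  have hinf := infinite_unit Kᗮ h2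
  obtain ⟨x, hx, hxB⟩ := (hinf.diff hB).nonempty
  exact ⟨x, hx.2, fun y hy => (Submodule.mem_orthogonal K x).1 hx.1 y
    (Submodule.subset_span hy), hxB⟩

lemma exists_unit_line (W : Submodule ℝ (Euc d)) (hW : finrank ℝ W = 1) :
    ∃ u : Euc d, u ∈ W ∧ ‖u‖ = 1 ∧ ∀ x ∈ W, ‖x‖ = 1 → x = u ∨ x = -u := by
  obtain ⟨w, hwW, hw0⟩ := Submodule.exists_mem_ne_zero_of_ne_bot (p := W)
    (by intro hb; rw [hb] at hW; simp at hW)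
  set u : Euc d := ‖w‖⁻¹ • w with hu
  have hwn : ‖w‖ ≠ 0 := norm_ne_zero_iff.2 hw0
  have huW : u ∈ W := W.smul_mem _ hwW
  have hun : ‖u‖ = 1 := by
    rw [hu, norm_smul, norm_inv, norm_norm]
    field_simp
  have hu0 : u ≠ 0 := by
    intro h; rw [h] at hun; simp at hun
  have hspan : span ℝ {u} = W := by
    apply Submodule.eq_of_le_of_finrank_eq
    · refine (span_le).2 ?_
      simp [huW]
    · rw [finrank_span_singleton hu0, hW]
  refine ⟨u, huW, hun, ?_⟩
  intro x hxW hxn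
  rw [← hspan] at hxW
  obtain ⟨a, rfl⟩ := Submodule.mem_span_singleton.1 hxW
  rw [norm_smul, hun, mul_one, Real.norm_eq_abs] at hxn
  rcases abs_eq (by norm_num : (0:ℝ) ≤ 1) |>.1 hxn with h | h <;> simp [h]

section Rotation

variable {d : ℕ} (g h : Euc d)

def rot (t : ℝ) (x : Euc d) : Euc d :=
  x + (Real.cos t * (inner ℝ g x : ℝ) - Real.sin t * (inner ℝ h x : ℝ) - (inner ℝ g x : ℝ)) • g
    + (Real.sin t * (inner ℝ g x : ℝ) + Real.cos t * (inner ℝ h x : ℝ) - (inner ℝ h x : ℝ)) • h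

variable (hg : ‖g‖ = 1) (hh : ‖h‖ = 1) (hgh : (inner ℝ g h : ℝ) = 0)

include hg hh hgh

lemma rot_inner (t : ℝ) (x y : Euc d) :
    (inner ℝ (rot g h t x) (rot g h t y) : ℝ) = inner ℝ x y := by
  have hgg : (inner ℝ g g : ℝ) = 1 := by
    rw [real_inner_self_eq_norm_sq, hg]; norm_num
  have hhh : (inner ℝ h h : ℝ) = 1 := by
    rw [real_inner_self_eq_norm_sq, hh]; norm_num
  have hhg : (inner ℝ h g : ℝ) = 0 := by rw [real_inner_comm]; exact hgh
  have hxg : (inner ℝ x g : ℝ) = inner ℝ g x := real_inner_comm _ _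
  have hxh : (inner ℝ x h : ℝ) = inner ℝ h x := real_inner_comm _ _
  have hyg : (inner ℝ g y : ℝ) = inner ℝ g y := rfl
  have pyth := Real.sin_sq_add_cos_sq t
  simp only [rot, inner_add_left, inner_add_right, real_inner_smul_left,
    real_inner_smul_right, hgg, hhh, hgh, hhg, hxg, hxh]
  linear_combination ((inner ℝ g x : ℝ) * (inner ℝ g y : ℝ) + (inner ℝ h x : ℝ) * (inner ℝ h y : ℝ)) * pyth

lemma rot_inner_g (t : ℝ) (x : Euc d) :
    (inner ℝ g (rot g h t x) : ℝ) = Real.cos t * inner ℝ g x - Real.sin t * inner ℝ h x := by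
  have hgg : (inner ℝ g g : ℝ) = 1 := by
    rw [real_inner_self_eq_norm_sq, hg]; norm_num
  simp only [rot, inner_add_right, real_inner_smul_right, hgg, hgh]
  ring

lemma rot_inner_h (t : ℝ) (x : Euc d) :
    (inner ℝ h (rot g h t x) : ℝ) = Real.sin t * inner ℝ g x + Real.cos t * inner ℝ h x := by
  have hhh : (inner ℝ h h : ℝ) = 1 := by
    rw [real_inner_self_eq_norm_sq, hh]; norm_num
  have hhg : (inner ℝ h g : ℝ) = 0 := by rw [real_inner_comm]; exact hgh
  simp only [rot, inner_add_right, real_inner_smul_right, hhh, hhg]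
  ring

lemma rot_arg_inj {t t' : ℝ} (ht : t ∈ Set.Icc 0 π) (ht' : t' ∈ Set.Icc 0 π)
    {x y : Euc d} (ha : (inner ℝ g x : ℝ) ≠ 0)
    (h1 : rot g h t x = y) (h2 : rot g h t' x = y) : t = t' := by
  set a : ℝ := inner ℝ g x
  set b : ℝ := inner ℝ h x
  have e1 : Real.cos t * a - Real.sin t * b = Real.cos t' * a - Real.sin t' * b := by
    have k1 := rot_inner_g g h hg hh hgh t x
    have k2 := rot_inner_g g h hg hh hgh t' x
    rw [h1] at k1; rw [h2] at k2; rw [← k1, ← k2]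
  have e2 : Real.sin t * a + Real.cos t * b = Real.sin t' * a + Real.cos t' * b := by
    have k1 := rot_inner_h g h hg hh hgh t x
    have k2 := rot_inner_h g h hg hh hgh t' x
    rw [h1] at k1; rw [h2] at k2; rw [← k1, ← k2]
  have hcc : (Real.cos t - Real.cos t') * (a ^ 2 + b ^ 2) = 0 := by
    linear_combination a * e1 + b * e2
  have hab : a ^ 2 + b ^ 2 > 0 := by positivity
  have : Real.cos t = Real.cos t' := by
    rcases mul_eq_zero.1 hcc with hc | hc
    · linarith
    · linarith
  exact Real.injOn_cos ht ht' this

end Rotation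

section RotAvoid

variable {d : ℕ}

lemma exists_inner_ne (hd : 2 ≤ d) (X : Finset (Euc d)) (hX : ∀ x ∈ X, x ≠ 0) :
    ∃ g : Euc d, g ≠ 0 ∧ ∀ x ∈ X, (inner ℝ g x : ℝ) ≠ 0 := by
  classical
  induction X using Finset.induction_on with
  | empty =>
      refine ⟨EuclideanSpace.single (⟨0, by omega⟩ : Fin d) (1:ℝ), ?_, by simp⟩
      intro h0
      have := congrArg norm h0
      rw [EuclideanSpace.norm_single] at this
      simp at this
  | @insert a s ha ih =>
      obtain ⟨g, hg0, hg⟩ := ih (fun x hx => hX x (Finset.mem_insert_of_mem hx))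
      have hane : a ≠ 0 := hX a (Finset.mem_insert_self a s)
      set B : Set ℝ := ⋃ x' ∈ (insert a s : Finset (Euc d)),
        {ε : ℝ | (inner ℝ g x' : ℝ) + ε * (inner ℝ a x' : ℝ) = 0} with hB
      have hBfin : B.Finite := by
        apply Set.Finite.biUnion (Finset.finite_toSet _)
        intro x' hx'
        apply Set.Subsingleton.finite
        intro p hp q hq
        simp only [Set.mem_setOf_eq] at hp hq
        have hsub : (p - q) * (inner ℝ a x' : ℝ) = 0 := by linarith
        have hne : ¬ ((inner ℝ g x' : ℝ) = 0 ∧ (inner ℝ a x' : ℝ) = 0) := by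
          rcases Finset.mem_insert.1 hx' with hax | hx's
          · rintro ⟨-, h2⟩
            rw [hax, real_inner_self_eq_norm_sq] at h2
            have : a = 0 := by
              have := norm_eq_zero.1 (by nlinarith [norm_nonneg a] : ‖a‖ = 0)
              exact this
            exact hane this
          · rintro ⟨h1, -⟩; exact hg x' hx's h1
        rcases mul_eq_zero.1 hsub with h | h
        · linarith
        · rw [h, mul_zero] at hp
          exfalso
          exact hne ⟨by linarith, by linarith⟩
      obtain ⟨ε, hε⟩ := (Set.Finite.infinite_compl hBfin).nonempty
      refine ⟨g + ε • a, ?_, ?_⟩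
      · intro h0
        apply hε
        rw [hB]
        refine Set.mem_biUnion (Finset.mem_insert_self a s) ?_
        simp only [Set.mem_setOf_eq]
        have : (inner ℝ (g + ε • a) a : ℝ) = 0 := by rw [h0]; exact inner_zero_left a
        rw [inner_add_left, real_inner_smul_left] at this
        linarith [this]
      · intro x hx hixa
        apply hε
        rw [hB]
        refine Set.mem_biUnion hx ?_
        simp only [Set.mem_setOf_eq]
        rw [inner_add_left, real_inner_smul_left] at hixa
        linarith [hixa]

lemma exists_unit_perp (hd : 2 ≤ d) (g : Euc d) (hg : g ≠ 0) :
    ∃ h : Euc d, ‖h‖ = 1 ∧ (inner ℝ g h : ℝ) = 0 := by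
  set K := Submodule.span ℝ ({g} : Set (Euc d))
  have hrk : finrank ℝ K + finrank ℝ Kᗮ = d := by
    rw [Submodule.finrank_add_finrank_orthogonal, finrank_euclideanSpace_fin]
  have hK1 : finrank ℝ K = 1 := finrank_span_singleton hg
  have : Kᗮ ≠ ⊥ := by
    intro hb
    rw [hb, finrank_bot] at hrk
    omega
  obtain ⟨h0, hh0, hh0ne⟩ := Submodule.exists_mem_ne_zero_of_ne_bot this
  have hn : ‖h0‖ ≠ 0 := norm_ne_zero_iff.2 hh0ne
  refine ⟨‖h0‖⁻¹ • h0, ?_, ?_⟩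
  · rw [norm_smul, norm_inv, norm_norm]; field_simp
  · rw [real_inner_smul_right]
    have := (Submodule.mem_orthogonal K h0).1 hh0 g (Submodule.subset_span rfl)
    rw [this, mul_zero]

lemma exists_rot_avoid (hd : 2 ≤ d) (X Y : Finset (Euc d)) (hX : ∀ x ∈ X, ‖x‖ = 1) :
    ∃ R : Euc d → Euc d, (∀ x y, (inner ℝ (R x) (R y) : ℝ) = inner ℝ x y) ∧
      ∀ x ∈ X, R x ∉ Y := by
  classical
  obtain ⟨g0, hg00, hg0⟩ := exists_inner_ne hd X (fun x hx => by
    intro h0; have := hX x hx; rw [h0] at this; simp at this)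
  have hg0n : ‖g0‖ ≠ 0 := norm_ne_zero_iff.2 hg00
  set g : Euc d := ‖g0‖⁻¹ • g0 with hgdef
  have hg : ‖g‖ = 1 := by rw [hgdef, norm_smul, norm_inv, norm_norm]; field_simp
  have hgX : ∀ x ∈ X, (inner ℝ g x : ℝ) ≠ 0 := by
    intro x hx
    rw [hgdef, real_inner_smul_left]
    exact mul_ne_zero (inv_ne_zero hg0n) (hg0 x hx)
  have hgne : g ≠ 0 := by intro h0; rw [h0] at hg; simp at hg
  obtain ⟨h, hh, hgh⟩ := exists_unit_perp hd g hgne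
  set B : Set ℝ := ⋃ x ∈ (X : Set (Euc d)), ⋃ y ∈ (Y : Set (Euc d)),
    {t : ℝ | t ∈ Set.Icc 0 π ∧ rot g h t x = y} with hBdef
  have hBfin : B.Finite := by
    apply Set.Finite.biUnion X.finite_toSet
    intro x hx
    apply Set.Finite.biUnion Y.finite_toSet
    intro y hy
    apply Set.Subsingleton.finite
    intro p hp q hq
    exact rot_arg_inj g h hg hh hgh hp.1 hq.1 (hgX x hx) hp.2 hq.2
  obtain ⟨t, ht⟩ := ((Set.Icc_infinite Real.pi_pos).diff hBfin).nonempty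
  refine ⟨rot g h t, rot_inner g h hg hh hgh t, ?_⟩
  intro x hx hmem
  apply ht.2
  rw [hBdef]
  refine Set.mem_biUnion hx ?_
  exact Set.mem_biUnion hmem ⟨ht.1, rfl⟩

lemma innerPres_norm {R : Euc d → Euc d}
    (hR : ∀ x y, (inner ℝ (R x) (R y) : ℝ) = inner ℝ x y) (x : Euc d) : ‖R x‖ = ‖x‖ := by
  have h1 : ‖R x‖ ^ 2 = ‖x‖ ^ 2 := by
    rw [← real_inner_self_eq_norm_sq, ← real_inner_self_eq_norm_sq]
    exact hR x x
  have := congrArg Real.sqrt h1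
  rwa [Real.sqrt_sq (norm_nonneg _), Real.sqrt_sq (norm_nonneg _)] at this

lemma innerPres_inj {R : Euc d → Euc d}
    (hR : ∀ x y, (inner ℝ (R x) (R y) : ℝ) = inner ℝ x y) {x y : Euc d}
    (hxy : R x = R y) : x = y := by
  have h1 : ‖x - y‖ ^ 2 = ‖R x - R y‖ ^ 2 := by
    rw [norm_sub_sq_real, norm_sub_sq_real, hR x y,
      innerPres_norm hR, innerPres_norm hR]
  rw [hxy, sub_self] at h1
  simp only [norm_zero] at h1
  have h2 : ‖x - y‖ = 0 := by nlinarith [norm_nonneg (x - y)]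
  exact sub_eq_zero.1 (norm_eq_zero.1 h2)

end RotAvoid

section Graph

open Finset

variable {V : Type*} {d : ℕ} (G : SimpleGraph V)

/-- Reachability within a finite set of vertices. -/
def RIn (s : Finset V) : V → V → Prop :=
  Relation.ReflTransGen (fun a b => G.Adj a b ∧ a ∈ s ∧ b ∈ s)

lemma RIn.symm {s : Finset V} {a b : V} (h : RIn G s a b) : RIn G s b a :=
  Std.Symm.symm (self := @Relation.ReflTransGen.symmetric _ _
    ⟨fun _ _ hxy => ⟨hxy.1.symm, hxy.2.2, hxy.2.1⟩⟩) _ _ h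

variable [DecidableEq V] [DecidableRel G.Adj]

/-- Degree of `z` into the set `s`. -/
def dS (s : Finset V) (z : V) : ℕ := (s.filter (fun b => G.Adj z b)).card

lemma dS_le_degree [Fintype V] (s : Finset V) (z : V) : dS G s z ≤ G.degree z := by
  rw [← SimpleGraph.card_neighborFinset_eq_degree]
  apply Finset.card_le_card
  intro b hb
  rw [SimpleGraph.mem_neighborFinset]
  exact (Finset.mem_filter.1 hb).2

lemma dS_mono {s t : Finset V} (hst : s ⊆ t) (z : V) : dS G s z ≤ dS G t z :=
  Finset.card_le_card (Finset.filter_subset_filter _ hst)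

lemma dS_erase_adj [Fintype V] {s : Finset V} {a z : V} (hz : z ∈ s) (ha : G.Adj a z) :
    dS G (s.erase z) a + 1 = dS G s a := by
  have hfe : (s.erase z).filter (fun b => G.Adj a b) =
      (s.filter (fun b => G.Adj a b)).erase z := by
    ext b
    simp only [Finset.mem_filter, Finset.mem_erase]
    tauto
  have hzf : z ∈ s.filter (fun b => G.Adj a b) := Finset.mem_filter.2 ⟨hz, ha⟩
  calc dS G (s.erase z) a + 1
      = ((s.filter (fun b => G.Adj a b)).erase z).card + 1 := by unfold dS; rw [hfe]
    _ = (s.filter (fun b => G.Adj a b)).card := by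
        rw [Finset.card_erase_of_mem hzf]
        exact Nat.succ_pred_eq_of_pos (Finset.card_pos.2 ⟨z, hzf⟩)
    _ = dS G s a := rfl

/-- The deficiency condition: every vertex of `s` can reach within `s` a vertex
of `s`-degree at most `d - 2`. -/
def Dcond (d : ℕ) (s : Finset V) : Prop :=
  ∀ w ∈ s, ∃ z ∈ s, RIn G s w z ∧ dS G s z + 2 ≤ d

lemma reach_avoid [Fintype V] (hdeg : ∀ v, G.degree v + 1 ≤ d) {s : Finset V} {z z₀ w : V}
    (h : RIn G s w z₀) (hw : w ∈ s.erase z)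
    (hz₀d : z₀ ∈ s.erase z → dS G s z₀ + 2 ≤ d) :
    ∃ z' ∈ s.erase z, RIn G (s.erase z) w z' ∧ dS G (s.erase z) z' + 2 ≤ d := by
  induction h using Relation.ReflTransGen.head_induction_on with
  | refl =>
      refine ⟨z₀, hw, Relation.ReflTransGen.refl, ?_⟩
      have := hz₀d hw
      have hmono := dS_mono G (Finset.erase_subset z s) z₀
      omega
  | @head a c hac hcz₀ ih =>
      obtain ⟨haadj, has, hcs⟩ := hac
      by_cases hcz : c = z
      · subst hcz
        refine ⟨a, hw, Relation.ReflTransGen.refl, ?_⟩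
        have h1 := dS_erase_adj G hcs haadj
        have h2 := dS_le_degree G s a
        have h3 := hdeg a
        omega
      · have hcmem : c ∈ s.erase z := Finset.mem_erase.2 ⟨hcz, hcs⟩
        obtain ⟨z', hz', hpath, hdz'⟩ := ih hcmem
        exact ⟨z', hz', Relation.ReflTransGen.head ⟨haadj, hw, hcmem⟩ hpath, hdz'⟩

lemma Dcond_erase [Fintype V] (hdeg : ∀ v, G.degree v + 1 ≤ d) {s : Finset V}
    (hD : Dcond G d s) (z : V) : Dcond G d (s.erase z) := by
  intro w hw
  obtain ⟨z₀, hz₀s, hpath, hz₀d⟩ := hD w (Finset.mem_of_mem_erase hw)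
  exact reach_avoid G hdeg hpath hw (fun _ => hz₀d)

lemma RIn_filter {s c : Finset V} {w₀ : V}
    (hc : ∀ x, x ∈ c ↔ x ∈ s ∧ RIn G s w₀ x) :
    ∀ {a b : V}, RIn G s a b → RIn G s w₀ a → RIn G c a b := by
  intro a b h
  induction h using Relation.ReflTransGen.head_induction_on with
  | refl => exact fun _ => Relation.ReflTransGen.refl
  | @head a x hax hxb ih =>
      intro hw₀a
      obtain ⟨haadj, has, hxs⟩ := hax
      have hw₀x : RIn G s w₀ x := hw₀a.tail ⟨haadj, has, hxs⟩
      exact Relation.ReflTransGen.head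
        ⟨haadj, (hc a).2 ⟨has, hw₀a⟩, (hc x).2 ⟨hxs, hw₀x⟩⟩
        (ih hw₀x)

end Graph

section Realization

variable {V : Type*} {d : ℕ} (G : SimpleGraph V) [DecidableEq V] [DecidableRel G.Adj]

def POrth (f : V → Euc d) (s : Finset V) : Prop :=
  (∀ v ∈ s, ‖f v‖ = 1) ∧
  ∀ u ∈ s, ∀ v ∈ s, G.Adj u v → (inner ℝ (f u) (f v) : ℝ) = 0

def PInj (f : V → Euc d) (s : Finset V) : Prop :=
  POrth G f s ∧ ∀ u ∈ s, ∀ v ∈ s, f u = f v → u = v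

def PGood (f : V → Euc d) (s : Finset V) : Prop :=
  PInj G f s ∧ ∀ u ∈ s, ∀ v ∈ s, f u ≠ -f v

lemma PGood_empty : PGood G (fun _ => (0 : Euc d)) (∅ : Finset V) :=
  ⟨⟨⟨fun v hv => (Finset.notMem_empty v hv).elim,
     fun u hu => (Finset.notMem_empty u hu).elim⟩,
    fun u hu => (Finset.notMem_empty u hu).elim⟩,
   fun u hu => (Finset.notMem_empty u hu).elim⟩

lemma extend_inj {f : V → Euc d} {s' : Finset V} {z : V} {x : Euc d} (hz : z ∉ s')
    (hPI : PInj G f s') (hxn : ‖x‖ = 1)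
    (hxorth : ∀ u ∈ s', G.Adj z u → (inner ℝ x (f u) : ℝ) = 0)
    (hximg : ∀ u ∈ s', x ≠ f u) :
    PInj G (Function.update f z x) (insert z s') := by
  have hupz : Function.update f z x z = x := Function.update_self z x f
  have hup : ∀ u ∈ s', Function.update f z x u = f u := fun u hu =>
    Function.update_of_ne (ne_of_mem_of_not_mem hu hz) x f
  refine ⟨⟨?_, ?_⟩, ?_⟩
  · intro v hv
    rcases Finset.mem_insert.1 hv with rfl | hv'
    · rw [hupz]; exact hxn
    · rw [hup v hv']; exact hPI.1.1 v hv'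
  · intro u hu v hv hadj
    rcases Finset.mem_insert.1 hu with rfl | hu' <;>
      rcases Finset.mem_insert.1 hv with rfl | hv'
    · exact absurd hadj (G.irrefl)
    · rw [hupz, hup v hv']; exact hxorth v hv' hadj
    · rw [hupz, hup u hu', real_inner_comm]
      exact hxorth u hu' hadj.symm
    · rw [hup u hu', hup v hv']; exact hPI.1.2 u hu' v hv' hadj
  · intro u hu v hv heq
    rcases Finset.mem_insert.1 hu with rfl | hu' <;>
      rcases Finset.mem_insert.1 hv with rfl | hv'
    · rfl
    · rw [hupz, hup v hv'] at heq; exact absurd heq (hximg v hv')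
    · rw [hupz, hup u hu'] at heq; exact absurd heq.symm (hximg u hu')
    · rw [hup u hu', hup v hv'] at heq; exact hPI.2 u hu' v hv' heq

lemma extend_good {f : V → Euc d} {s' : Finset V} {z : V} {x : Euc d} (hz : z ∉ s')
    (hPG : PGood G f s') (hxn : ‖x‖ = 1)
    (hxorth : ∀ u ∈ s', G.Adj z u → (inner ℝ x (f u) : ℝ) = 0)
    (hximg : ∀ u ∈ s', x ≠ f u)
    (hxneg : ∀ u ∈ s', x ≠ -f u) :
    PGood G (Function.update f z x) (insert z s') := by
  have hupz : Function.update f z x z = x := Function.update_self z x f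
  have hup : ∀ u ∈ s', Function.update f z x u = f u := fun u hu =>
    Function.update_of_ne (ne_of_mem_of_not_mem hu hz) x f
  have hx0 : x ≠ 0 := by intro h; rw [h] at hxn; simp at hxn
  refine ⟨extend_inj G hz hPG.1 hxn hxorth hximg, ?_⟩
  intro u hu v hv heq
  rcases Finset.mem_insert.1 hu with rfl | hu' <;>
    rcases Finset.mem_insert.1 hv with rfl | hv'
  · rw [hupz] at heq
    apply hx0
    have h2 : (2 : ℝ) • x = 0 := by
      rw [two_smul]
      nth_rewrite 1 [heq]
      exact neg_add_cancel x
    have := smul_eq_zero.1 h2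
    rcases this with h | h
    · norm_num at h
    · exact h
  · rw [hupz, hup v hv'] at heq; exact hxneg v hv' heq
  · rw [hupz, hup u hu'] at heq
    exact hxneg u hu' (by rw [heq, neg_neg])
  · rw [hup u hu', hup v hv'] at heq; exact hPG.2 u hu' v hv' heq

lemma extend_free [Fintype V] (hd2 : 2 ≤ d) {f : V → Euc d} {s' : Finset V} {z : V}
    (hz : z ∉ s') (hdS : dS G s' z + 2 ≤ d) (hPG : PGood G f s') :
    ∃ f' : V → Euc d, PGood G f' (insert z s') := by
  classical
  set T : Finset (Euc d) := (s'.filter (fun b => G.Adj z b)).image f with hT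
  have hTc : T.card ≤ dS G s' z := Finset.card_image_le
  have hfr : Module.finrank ℝ (Submodule.span ℝ (T : Set (Euc d))) ≤ T.card :=
    finrank_span_finset_le_card T
  have hrank : Module.finrank ℝ (Submodule.span ℝ (T : Set (Euc d))) + 2 ≤ d := by omega
  set B : Finset (Euc d) := s'.image f ∪ (s'.image f).image (fun y => -y) with hB
  obtain ⟨x, hxn, hxorth, hxB⟩ :=
    exists_unit_orth_avoid T hrank (B : Set (Euc d)) B.finite_toSet
  refine ⟨_, extend_good G hz hPG hxn ?_ ?_ ?_⟩
  · intro u hu hadj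
    have hmem : f u ∈ T := Finset.mem_image.2 ⟨u, Finset.mem_filter.2 ⟨hu, hadj⟩, rfl⟩
    rw [real_inner_comm]
    exact hxorth _ hmem
  · intro u hu heq
    exact hxB (Finset.mem_coe.2 (Finset.mem_union.2
      (Or.inl (Finset.mem_image.2 ⟨u, hu, heq.symm⟩))))
  · intro u hu heq
    exact hxB (Finset.mem_coe.2 (Finset.mem_union.2
      (Or.inr (Finset.mem_image.2 ⟨f u, Finset.mem_image.2 ⟨u, hu, rfl⟩, heq.symm⟩))))

lemma extend_forced [Fintype V] (hd2 : 2 ≤ d) (hdeg : ∀ v, G.degree v + 1 ≤ d)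
    {f : V → Euc d} {s' : Finset V} {z : V} (hz : z ∉ s') (hPG : PGood G f s') :
    ∃ f' : V → Euc d, PInj G f' (insert z s') := by
  classical
  set T : Finset (Euc d) := (s'.filter (fun b => G.Adj z b)).image f with hT
  have hTc : T.card ≤ dS G s' z := Finset.card_image_le
  have hdSz : dS G s' z ≤ G.degree z := dS_le_degree G s' z
  have hdz := hdeg z
  have hfr : Module.finrank ℝ (Submodule.span ℝ (T : Set (Euc d))) ≤ T.card :=
    finrank_span_finset_le_card T
  by_cases hrank : Module.finrank ℝ (Submodule.span ℝ (T : Set (Euc d))) + 2 ≤ d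
  · obtain ⟨x, hxn, hxorth, hxB⟩ :=
      exists_unit_orth_avoid T hrank ((s'.image f : Finset (Euc d)) : Set (Euc d))
        (s'.image f).finite_toSet
    refine ⟨_, extend_inj G hz hPG.1 hxn ?_ ?_⟩
    · intro u hu hadj
      have hmem : f u ∈ T := Finset.mem_image.2 ⟨u, Finset.mem_filter.2 ⟨hu, hadj⟩, rfl⟩
      rw [real_inner_comm]
      exact hxorth _ hmem
    · intro u hu heq
      exact hxB (Finset.mem_coe.2 (Finset.mem_image.2 ⟨u, hu, heq.symm⟩))
  · have hsum := Submodule.finrank_add_finrank_orthogonal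
      (𝕜 := ℝ) (Submodule.span ℝ (T : Set (Euc d)))
    rw [finrank_euclideanSpace_fin] at hsum
    have h1 : Module.finrank ℝ (Submodule.span ℝ (T : Set (Euc d)))ᗮ = 1 := by omega
    obtain ⟨u, huW, hun, hall⟩ := exists_unit_line _ h1
    have horthu : ∀ y ∈ T, (inner ℝ y u : ℝ) = 0 := fun y hy =>
      (Submodule.mem_orthogonal _ u).1 huW y (Submodule.subset_span hy)
    by_cases hcase : ∃ a ∈ s', f a = u
    · obtain ⟨a, has, hfa⟩ := hcase
      refine ⟨_, extend_inj G hz hPG.1 (by rw [norm_neg]; exact hun) ?_ ?_⟩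
      · intro v hv hadj
        have hmem : f v ∈ T := Finset.mem_image.2 ⟨v, Finset.mem_filter.2 ⟨hv, hadj⟩, rfl⟩
        have h0 := horthu (f v) hmem
        rw [inner_neg_left, real_inner_comm, h0, neg_zero]
      · intro v hv heq
        apply hPG.2 a has v hv
        rw [hfa, ← heq, neg_neg]
    · push_neg at hcase
      refine ⟨_, extend_inj G hz hPG.1 hun ?_ ?_⟩
      · intro v hv hadj
        have hmem : f v ∈ T := Finset.mem_image.2 ⟨v, Finset.mem_filter.2 ⟨hv, hadj⟩, rfl⟩
        rw [real_inner_comm]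
        exact horthu (f v) hmem
      · intro v hv heq
        exact hcase v hv heq.symm

lemma good_of_D [Fintype V] (hd2 : 2 ≤ d) (hdeg : ∀ v, G.degree v + 1 ≤ d) :
    ∀ n (s : Finset V), s.card ≤ n → Dcond G d s → ∃ f : V → Euc d, PGood G f s := by
  intro n
  induction n with
  | zero =>
      intro s hs _
      have : s = ∅ := Finset.card_eq_zero.1 (Nat.le_zero.1 hs)
      subst this
      exact ⟨_, PGood_empty G⟩
  | succ n ih =>
      intro s hs hD
      rcases Finset.eq_empty_or_nonempty s with rfl | ⟨w, hw⟩
      · exact ⟨_, PGood_empty G⟩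
      obtain ⟨z, hzs, _, hzd⟩ := hD w hw
      have hD' : Dcond G d (s.erase z) := Dcond_erase G hdeg hD z
      have hcard : (s.erase z).card ≤ n := by
        rw [Finset.card_erase_of_mem hzs]
        omega
      obtain ⟨f, hf⟩ := ih (s.erase z) hcard hD'
      have hdz : dS G (s.erase z) z + 2 ≤ d := by
        have := dS_mono G (Finset.erase_subset z s) z
        omega
      obtain ⟨f', hf'⟩ := extend_free G hd2 (Finset.notMem_erase z s) hdz hf
      rw [Finset.insert_erase hzs] at hf'
      exact ⟨f', hf'⟩

lemma inj_all [Fintype V] (hd2 : 2 ≤ d) (hdeg : ∀ v, G.degree v + 1 ≤ d) :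
    ∀ n (s : Finset V), s.card ≤ n → ∃ f : V → Euc d, PInj G f s := by
  intro n
  induction n with
  | zero =>
      intro s hs
      have : s = ∅ := Finset.card_eq_zero.1 (Nat.le_zero.1 hs)
      subst this
      exact ⟨_, (PGood_empty G).1⟩
  | succ n ih =>
      intro s hs
      rcases Finset.eq_empty_or_nonempty s with rfl | ⟨w₀, hw₀⟩
      · exact ⟨_, (PGood_empty G).1⟩
      classical
      set c : Finset V := s.filter (fun b => RIn G s w₀ b) with hc
      have hcmem : ∀ x, x ∈ c ↔ x ∈ s ∧ RIn G s w₀ x := by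
        intro x; rw [hc]; exact Finset.mem_filter
      have hw₀c : w₀ ∈ c := (hcmem w₀).2 ⟨hw₀, Relation.ReflTransGen.refl⟩
      have hcs : c ⊆ s := by rw [hc]; exact Finset.filter_subset _ s
      have hclosed : ∀ a ∈ c, ∀ b ∈ s, G.Adj a b → b ∈ c := by
        intro a ha b hb hab
        exact (hcmem b).2 ⟨hb, ((hcmem a).1 ha).2.tail ⟨hab, ((hcmem a).1 ha).1, hb⟩⟩
      have hscc : (s \ c).card ≤ n := by
        have h1 := Finset.card_sdiff_of_subset hcs
        have h2 : 0 < c.card := Finset.card_pos.2 ⟨w₀, hw₀c⟩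
        have h3 := Finset.card_le_card hcs
        omega
      obtain ⟨f₁, hf₁⟩ := ih (s \ c) hscc
      have hDc : Dcond G d (c.erase w₀) := by
        intro w hw
        have hwc := Finset.mem_of_mem_erase hw
        have hr : RIn G c w₀ w :=
          RIn_filter G hcmem ((hcmem w).1 hwc).2 Relation.ReflTransGen.refl
        have hrev : RIn G c w w₀ := RIn.symm G hr
        exact reach_avoid G hdeg hrev hw
          (fun hmem => absurd rfl (Finset.mem_erase.1 hmem).1)
      obtain ⟨f₂', hf₂'⟩ := good_of_D G hd2 hdeg n (c.erase w₀) (by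
        have h1 := Finset.card_erase_of_mem hw₀c
        have h2 := Finset.card_le_card hcs
        omega) hDc
      obtain ⟨f₂, hf₂⟩ := extend_forced G hd2 hdeg (Finset.notMem_erase w₀ c) hf₂'
      rw [Finset.insert_erase hw₀c] at hf₂
      obtain ⟨R, hR, hRav⟩ := exists_rot_avoid hd2 (c.image f₂) ((s \ c).image f₁) (by
        intro x hx
        obtain ⟨u, hu, rfl⟩ := Finset.mem_image.1 hx
        exact hf₂.1.1 u hu)
      refine ⟨fun v => if v ∈ c then R (f₂ v) else f₁ v, ⟨?_, ?_⟩, ?_⟩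
      · intro v hv
        dsimp only
        by_cases hvc : v ∈ c
        · rw [if_pos hvc, innerPres_norm hR]
          exact hf₂.1.1 v hvc
        · rw [if_neg hvc]
          exact hf₁.1.1 v (Finset.mem_sdiff.2 ⟨hv, hvc⟩)
      · intro u hu v hv hadj
        dsimp only
        by_cases huc : u ∈ c <;> by_cases hvc : v ∈ c
        · rw [if_pos huc, if_pos hvc, hR]
          exact hf₂.1.2 u huc v hvc hadj
        · exact absurd (hclosed u huc v hv hadj) hvc
        · exact absurd (hclosed v hvc u hu hadj.symm) huc
        · rw [if_neg huc, if_neg hvc]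
          exact hf₁.1.2 u (Finset.mem_sdiff.2 ⟨hu, huc⟩) v (Finset.mem_sdiff.2 ⟨hv, hvc⟩) hadj
      · intro u hu v hv heq
        dsimp only at heq
        by_cases huc : u ∈ c <;> by_cases hvc : v ∈ c
        · rw [if_pos huc, if_pos hvc] at heq
          exact hf₂.2 u huc v hvc (innerPres_inj hR heq)
        · rw [if_pos huc, if_neg hvc] at heq
          exact absurd (Finset.mem_image.2 ⟨v, Finset.mem_sdiff.2 ⟨hv, hvc⟩, heq.symm⟩)
            (hRav (f₂ u) (Finset.mem_image.2 ⟨u, huc, rfl⟩))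
        · rw [if_neg huc, if_pos hvc] at heq
          exact absurd (Finset.mem_image.2 ⟨u, Finset.mem_sdiff.2 ⟨hu, huc⟩, heq⟩)
            (hRav (f₂ v) (Finset.mem_image.2 ⟨v, hvc, rfl⟩))
        · rw [if_neg huc, if_neg hvc] at heq
          exact hf₁.2 u (Finset.mem_sdiff.2 ⟨hu, huc⟩) v (Finset.mem_sdiff.2 ⟨hv, hvc⟩) heq

end Realization

end SphereRealAux

theorem stmt_1 {V : Type*} [Fintype V] (d : ℕ) (hd : 2 ≤ d)
    (G : SimpleGraph V) [DecidableRel G.Adj] (hdeg : ∀ v : V, G.degree v ≤ d - 1) :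
    SphereRealizable G d := by
  classical
  have hdeg' : ∀ v, G.degree v + 1 ≤ d := by
    intro v
    have := hdeg v
    omega
  obtain ⟨f, hf⟩ := SphereRealAux.inj_all (d := d) G hd hdeg' (Fintype.card V) Finset.univ
    (le_of_eq Finset.card_univ)
  have hs2 : Real.sqrt 2 ≠ 0 := by
    intro h
    have := Real.sqrt_pos.2 (by norm_num : (0:ℝ) < 2)
    linarith
  refine ⟨fun v => (Real.sqrt 2)⁻¹ • f v, ?_, ?_, ?_⟩
  · intro u v h
    have h2 : f u = f v := smul_right_injective _ (inv_ne_zero hs2) h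
    exact hf.2 u (Finset.mem_univ u) v (Finset.mem_univ v) h2
  · intro v
    rw [norm_smul, hf.1.1 v (Finset.mem_univ v), mul_one, norm_inv, Real.norm_eq_abs,
      abs_of_nonneg (Real.sqrt_nonneg 2), one_div]
  · intro u v hadj
    have h1 : ‖f u - f v‖ = Real.sqrt 2 := by
      have hsq : ‖f u - f v‖ ^ 2 = 2 := by
        rw [norm_sub_sq_real, hf.1.1 u (Finset.mem_univ u), hf.1.1 v (Finset.mem_univ v),
          hf.1.2 u (Finset.mem_univ u) v (Finset.mem_univ v) hadj]
        norm_num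
      rw [← Real.sqrt_sq (norm_nonneg _), hsq]
    rw [dist_eq_norm, ← smul_sub, norm_smul, h1, norm_inv, Real.norm_eq_abs,
      abs_of_nonneg (Real.sqrt_nonneg 2)]
    exact inv_mul_cancel₀ hs2
end
end

section
/- Let d ≥ 1 and let G be the graph on 2d + 2 vertices that is the disjoint union of a complete graph K_{d+2} on d + 2 vertices and d isolated vertices. Then neither G nor its complement is realizable in ℝ^d. -/
open InnerProductSpace Finset

/-- A graph `G` is realizable in `ℝ^d` if there is an injective map from its vertices to
`EuclideanSpace ℝ (Fin d)` sending adjacent vertices to points at distance `1`. -/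
def GraphRealizable {V : Type*} (G : SimpleGraph V) (d : ℕ) : Prop :=
  ∃ f : V → EuclideanSpace ℝ (Fin d), Function.Injective f ∧
    ∀ u v : V, G.Adj u v → dist (f u) (f v) = 1

/-- The disjoint union of a complete graph on `Fin a` and `b` isolated vertices:
two vertices are adjacent exactly when they are distinct and both lie in the left part. -/
def cliquePlusIsolated (a b : ℕ) : SimpleGraph (Fin a ⊕ Fin b) where
  Adj x y := x ≠ y ∧ x.isLeft ∧ y.isLeft
  symm := ⟨fun x y h => ⟨h.1.symm, h.2.2, h.2.1⟩⟩
  loopless := ⟨fun x h => h.1 rfl⟩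

/-- Unit vectors with pairwise inner product `1/2` are linearly independent. -/
lemma linearIndependent_of_unit_half {d n : ℕ} (v : Fin n → EuclideanSpace ℝ (Fin d))
    (hnorm : ∀ i, ‖v i‖ = 1)
    (hinner : ∀ i j, i ≠ j → ⟪v i, v j⟫_ℝ = 1 / 2) :
    LinearIndependent ℝ v := by
  rw [Fintype.linearIndependent_iff]
  intro g hg
  have hterm : ∀ i j : Fin n, g i * g j * ⟪v i, v j⟫_ℝ
      = g i * g j / 2 + (if i = j then g i * g j / 2 else 0) := by
    intro i j
    by_cases h : i = j
    · subst h
      have h1 : ⟪v i, v i⟫_ℝ = 1 := by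
        rw [real_inner_self_eq_norm_sq, hnorm]; norm_num
      rw [h1, if_pos rfl]; ring
    · rw [hinner i j h, if_neg h]; ring
  have expand : ∀ i : Fin n, ⟪g i • v i, ∑ j, g j • v j⟫_ℝ
      = g i * (∑ j, g j) / 2 + g i * g i / 2 := by
    intro i
    rw [inner_sum]
    have h2 : ∀ j ∈ Finset.univ, ⟪g i • v i, g j • v j⟫_ℝ
        = g i * g j / 2 + (if i = j then g i * g j / 2 else 0) := by
      intro j _
      rw [real_inner_smul_left, real_inner_smul_right, ← mul_assoc, hterm]
    rw [Finset.sum_congr rfl h2, Finset.sum_add_distrib, Finset.sum_ite_eq,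
      if_pos (Finset.mem_univ i)]
    congr 1
    rw [← Finset.sum_div, ← Finset.mul_sum]
  have hIP : ⟪∑ i, g i • v i, ∑ j, g j • v j⟫_ℝ
      = (∑ i, g i) ^ 2 / 2 + ∑ i, g i * g i / 2 := by
    rw [sum_inner, Finset.sum_congr rfl (fun i _ => expand i), Finset.sum_add_distrib]
    congr 1
    rw [← Finset.sum_div, ← Finset.sum_mul, sq]
  rw [hg, inner_zero_left] at hIP
  have h1 : (0:ℝ) ≤ (∑ i, g i) ^ 2 / 2 := by positivity
  have h2 : ∀ i ∈ Finset.univ, (0:ℝ) ≤ g i * g i / 2 :=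
    fun i _ => div_nonneg (mul_self_nonneg _) (by norm_num)
  have hzero : (∑ i, g i * g i / 2) = 0 := by
    have := Finset.sum_nonneg h2
    linarith
  intro i
  have h3 := (Finset.sum_eq_zero_iff_of_nonneg h2).mp hzero i (Finset.mem_univ i)
  nlinarith [h3]

theorem stmt_7 (d : ℕ) (hd : 1 ≤ d) :
    ¬ GraphRealizable (cliquePlusIsolated (d + 2) d) d ∧
    ¬ GraphRealizable (cliquePlusIsolated (d + 2) d)ᶜ d := by
  constructor
  · rintro ⟨f, hinj, hdist⟩
    -- the d+2 clique points are pairwise at distance 1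
    set q : Fin (d + 2) → EuclideanSpace ℝ (Fin d) := fun i => f (Sum.inl i) with hq
    have hqd : ∀ i j : Fin (d + 2), i ≠ j → dist (q i) (q j) = 1 := by
      intro i j hij
      exact hdist _ _ ⟨fun h => hij (Sum.inl_injective h), rfl, rfl⟩
    set v : Fin (d + 1) → EuclideanSpace ℝ (Fin d) := fun i => q i.succ - q 0 with hv
    have hnorm : ∀ i, ‖v i‖ = 1 := by
      intro i
      rw [hv]
      rw [← dist_eq_norm]
      exact hqd _ _ (Fin.succ_ne_zero i)
    have hinner : ∀ i j, i ≠ j → ⟪v i, v j⟫_ℝ = 1 / 2 := by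
      intro i j hij
      have h1 : ‖v i - v j‖ = 1 := by
        have : v i - v j = q i.succ - q j.succ := by rw [hv]; exact sub_sub_sub_cancel_right _ _ _
        rw [this, ← dist_eq_norm]
        exact hqd _ _ (by simpa [Fin.ext_iff, Fin.val_succ] using fun h => hij (Fin.ext h))
      have := norm_sub_sq_real (v i) (v j)
      rw [h1, hnorm i, hnorm j] at this
      linarith
    have hli := linearIndependent_of_unit_half v hnorm hinner
    have := hli.fintype_card_le_finrank
    rw [finrank_euclideanSpace_fin, Fintype.card_fin] at this
    omega
  · rintro ⟨f, hinj, hdist⟩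
    set o : EuclideanSpace ℝ (Fin d) := f (Sum.inl ⟨0, by omega⟩) with ho
    set v : Fin d → EuclideanSpace ℝ (Fin d) := fun i => f (Sum.inr i) - o with hv
    have hadjLR : ∀ (k : Fin (d+2)) (i : Fin d),
        (cliquePlusIsolated (d + 2) d)ᶜ.Adj (Sum.inl k) (Sum.inr i) := by
      intro k i
      rw [SimpleGraph.compl_adj]
      exact ⟨Sum.inl_ne_inr, fun h => by simpa using h.2.2⟩
    have hadjRR : ∀ i j : Fin d, i ≠ j →
        (cliquePlusIsolated (d + 2) d)ᶜ.Adj (Sum.inr i) (Sum.inr j) := by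
      intro i j hij
      rw [SimpleGraph.compl_adj]
      exact ⟨fun h => hij (Sum.inr_injective h), fun h => by simpa using h.2.1⟩
    have hnorm : ∀ i, ‖v i‖ = 1 := by
      intro i
      rw [hv, ← dist_eq_norm, dist_comm]
      exact hdist _ _ (hadjLR _ i)
    have hinner : ∀ i j, i ≠ j → ⟪v i, v j⟫_ℝ = 1 / 2 := by
      intro i j hij
      have h1 : ‖v i - v j‖ = 1 := by
        have : v i - v j = f (Sum.inr i) - f (Sum.inr j) := by rw [hv]; exact sub_sub_sub_cancel_right _ _ _
        rw [this, ← dist_eq_norm]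
        exact hdist _ _ (hadjRR i j hij)
      have := norm_sub_sq_real (v i) (v j)
      rw [h1, hnorm i, hnorm j] at this
      linarith
    have hli := linearIndependent_of_unit_half v hnorm hinner
    haveI : Nonempty (Fin d) := ⟨⟨0, hd⟩⟩
    have hspan : Submodule.span ℝ (Set.range v) = ⊤ :=
      hli.span_eq_top_of_card_eq_finrank (by simp [finrank_euclideanSpace_fin])
    -- two further left points
    set a : EuclideanSpace ℝ (Fin d) := f (Sum.inl ⟨1, by omega⟩) - o with ha
    set b : EuclideanSpace ℝ (Fin d) := f (Sum.inl ⟨2, by omega⟩) - o with hb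
    have key : ∀ (x : EuclideanSpace ℝ (Fin d)), (∀ i : Fin d, ‖x - v i‖ = 1) →
        ∀ i, ⟪x, v i⟫_ℝ = ‖x‖ ^ 2 / 2 := by
      intro x hx i
      have := norm_sub_sq_real x (v i)
      rw [hx i, hnorm i] at this
      linarith
    have hxa : ∀ i : Fin d, ‖a - v i‖ = 1 := by
      intro i
      have : a - v i = f (Sum.inl ⟨1, by omega⟩) - f (Sum.inr i) := by rw [ha, hv]; exact sub_sub_sub_cancel_right _ _ _
      rw [this, ← dist_eq_norm]
      exact hdist _ _ (hadjLR _ i)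
    have hxb : ∀ i : Fin d, ‖b - v i‖ = 1 := by
      intro i
      have : b - v i = f (Sum.inl ⟨2, by omega⟩) - f (Sum.inr i) := by rw [hb, hv]; exact sub_sub_sub_cancel_right _ _ _
      rw [this, ← dist_eq_norm]
      exact hdist _ _ (hadjLR _ i)
    set w : EuclideanSpace ℝ (Fin d) := ‖b‖ ^ 2 • a - ‖a‖ ^ 2 • b with hw
    have hwv : ∀ i, ⟪w, v i⟫_ℝ = 0 := by
      intro i
      rw [hw, inner_sub_left, real_inner_smul_left, real_inner_smul_left,
        key a hxa i, key b hxb i]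
      ring
    have hwmem : Submodule.span ℝ (Set.range v) ≤ (ℝ ∙ w)ᗮ := by
      rw [Submodule.span_le]
      rintro _ ⟨i, rfl⟩
      rw [SetLike.mem_coe, Submodule.mem_orthogonal_singleton_iff_inner_left]
      exact (real_inner_comm _ _).trans (hwv i)
    have hw0 : w = 0 := by
      have hmem : w ∈ (ℝ ∙ w)ᗮ := by
        rw [hspan] at hwmem
        exact hwmem Submodule.mem_top
      rw [Submodule.mem_orthogonal_singleton_iff_inner_right] at hmem
      exact inner_self_eq_zero.mp hmem
    have hane : a ≠ 0 := by
      rw [ha, sub_ne_zero, ho]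
      exact fun h => by simpa [Fin.ext_iff] using hinj h
    have hbne : b ≠ 0 := by
      rw [hb, sub_ne_zero, ho]
      exact fun h => by simpa [Fin.ext_iff] using hinj h
    have heq : ‖b‖ ^ 2 • a = ‖a‖ ^ 2 • b := by
      rw [hw, sub_eq_zero] at hw0; exact hw0
    have hna : 0 < ‖a‖ := norm_pos_iff.mpr hane
    have hnb : 0 < ‖b‖ := norm_pos_iff.mpr hbne
    have hnormeq : ‖a‖ = ‖b‖ := by
      have h4 := congrArg norm heq
      rw [norm_smul, norm_smul, Real.norm_eq_abs, Real.norm_eq_abs,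
        abs_of_nonneg (sq_nonneg ‖b‖), abs_of_nonneg (sq_nonneg ‖a‖)] at h4
      have h5 : ‖a‖ * ‖b‖ * (‖b‖ - ‖a‖) = 0 := by linear_combination h4
      rcases mul_eq_zero.mp h5 with h6 | h6
      · nlinarith
      · linarith
    have hab : a = b := by
      rw [hnormeq] at heq
      exact smul_right_injective _ (ne_of_gt (pow_pos hnb 2)) heq
    rw [ha, hb, sub_left_inj] at hab
    have := hinj hab
    simp [Fin.ext_iff] at this
end

section
/- Let G = (V, E) be a finite simple graph with maximum degree at most k, let α ≥ 1, and let k_1, …, k_α be non-negative integers with k_1 + ⋯ + k_α = k − α + 1. Then there is a partition V = V_1 ∪ ⋯ ∪ V_α of the vertex set into α pairwise disjoint parts such that for each i = 1, …, α the induced subgraph G[V_i] has maximum degree at most k_i. -/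
theorem stmt_8 {V : Type*} [Fintype V] (G : SimpleGraph V) [DecidableRel G.Adj]
    (k α : ℕ) (hα : 1 ≤ α) (hdeg : ∀ v : V, G.degree v ≤ k)
    (ks : Fin α → ℕ) (hsum : (∑ i, ks i) + α = k + 1) :
    ∃ P : V → Fin α, ∀ v : V,
      ((G.neighborFinset v).filter (fun u => P u = P v)).card ≤ ks (P v) := by
  classical
  haveI : NeZero α := ⟨by omega⟩
  set N : ℕ := ∏ i, (ks i + 1) with hN
  have hdvd : ∀ i, (ks i + 1) ∣ N := fun i => Finset.dvd_prod_of_mem _ (Finset.mem_univ i)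
  set w : Fin α → ℕ := fun i => N / (ks i + 1) with hw
  have hwmul : ∀ i, (ks i + 1) * w i = N := fun i => Nat.mul_div_cancel' (hdvd i)
  have hNpos : 0 < N := Finset.prod_pos (fun i _ => Nat.succ_pos _)
  have hwpos : ∀ i, 0 < w i := by
    intro i
    rcases Nat.eq_zero_or_pos (w i) with h | h
    · exfalso; have := hwmul i; rw [h, Nat.mul_zero] at this; omega
    · exact h
  set F : (V → Fin α) → V → V → ℕ :=
    fun P v u => if G.Adj v u ∧ P u = P v then w (P v) else 0 with hF
  have hFsymm : ∀ (Q : V → Fin α) (v u : V), F Q v u = F Q u v := by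
    intro Q v u
    simp only [hF]
    rcases eq_or_ne (Q u) (Q v) with h2 | h2
    · simp [h2, G.adj_comm]
    · simp [h2, h2.symm]
  -- row sum formula
  have hS : ∀ (Q : V → Fin α) (v0 : V) (c : Fin α), Q v0 = c → (∑ u, F Q v0 u)
      = ((G.neighborFinset v0).filter (fun u => Q u = c)).card * w c := by
    intro Q v0 c hc
    subst hc
    simp only [hF]
    rw [← Finset.sum_filter]
    rw [Finset.sum_const, smul_eq_mul]
    congr 1
    congr 1
    ext u
    simp [SimpleGraph.mem_neighborFinset]
  -- decomposition of the potential
  have hdecomp : ∀ (Q : V → Fin α) (v0 : V),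
      (∑ v, ∑ u, F Q v u) =
        (∑ v ∈ Finset.univ.erase v0, ∑ u ∈ Finset.univ.erase v0, F Q v u)
          + 2 * (∑ u, F Q v0 u) := by
    intro Q v0
    have h0 : F Q v0 v0 = 0 := by simp [hF]
    have hrow : ∀ v : V, (∑ u, F Q v u) = F Q v v0 + ∑ u ∈ Finset.univ.erase v0, F Q v u :=
      fun v => (Finset.add_sum_erase _ _ (Finset.mem_univ v0)).symm
    calc (∑ v, ∑ u, F Q v u)
        = (∑ u, F Q v0 u) + ∑ v ∈ Finset.univ.erase v0, ∑ u, F Q v u :=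
          (Finset.add_sum_erase _ _ (Finset.mem_univ v0)).symm
      _ = (∑ u, F Q v0 u) + ∑ v ∈ Finset.univ.erase v0,
            (F Q v v0 + ∑ u ∈ Finset.univ.erase v0, F Q v u) := by
          rw [Finset.sum_congr rfl fun v _ => hrow v]
      _ = (∑ u, F Q v0 u) + ((∑ v ∈ Finset.univ.erase v0, F Q v v0)
            + ∑ v ∈ Finset.univ.erase v0, ∑ u ∈ Finset.univ.erase v0, F Q v u) := by
          rw [Finset.sum_add_distrib]
      _ = (∑ v ∈ Finset.univ.erase v0, ∑ u ∈ Finset.univ.erase v0, F Q v u)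
            + 2 * (∑ u, F Q v0 u) := by
          have : (∑ v ∈ Finset.univ.erase v0, F Q v v0) = ∑ u, F Q v0 u := by
            rw [Finset.sum_congr rfl fun v _ => hFsymm Q v v0]
            rw [← Finset.add_sum_erase _ _ (Finset.mem_univ v0), h0, zero_add]
          rw [this]; ring
  obtain ⟨P, hP⟩ := Finite.exists_min (fun P : V → Fin α => ∑ v, ∑ u, F P v u)
  refine ⟨P, fun v0 => ?_⟩
  by_contra hcon
  push_neg at hcon
  set d : Fin α → ℕ := fun c => ((G.neighborFinset v0).filter (fun u => P u = c)).card with hd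
  have hsumd : ∑ c, d c = G.degree v0 := by
    rw [SimpleGraph.degree]
    exact (Finset.card_eq_sum_card_fiberwise (fun x _ => Finset.mem_univ (P x))).symm
  obtain ⟨j, hj⟩ : ∃ j, d j ≤ ks j := by
    by_contra h
    push_neg at h
    have h1 : ∑ c, (ks c + 1) ≤ ∑ c, d c := Finset.sum_le_sum fun c _ => h c
    have h2 : ∑ c, (ks c + 1) = k + 1 := by
      rw [Finset.sum_add_distrib, Finset.sum_const, Finset.card_univ, Fintype.card_fin,
        smul_eq_mul, mul_one]
      omega
    have := hdeg v0
    omega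
  set P' : V → Fin α := Function.update P v0 j with hP'def
  have hne : ∀ u ∈ G.neighborFinset v0, u ≠ v0 := by
    intro u hu h
    subst h
    simp [SimpleGraph.mem_neighborFinset] at hu
  have hcon' : ks (P v0) < d (P v0) := hcon
  -- old row sum is large
  have hSP : (∑ u, F P v0 u) = d (P v0) * w (P v0) := hS P v0 (P v0) rfl
  have hSPbig : N ≤ ∑ u, F P v0 u := by
    rw [hSP]
    calc N = (ks (P v0) + 1) * w (P v0) := (hwmul _).symm
      _ ≤ d (P v0) * w (P v0) := Nat.mul_le_mul_right _ (by omega)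
  -- new row sum is small
  have hSP' : (∑ u, F P' v0 u) = d j * w j := by
    rw [hS P' v0 j (Function.update_self _ _ _)]
    congr 2
    apply Finset.filter_congr
    intro u hu
    rw [hP'def, Function.update_of_ne (hne u hu)]
  have hSP'small : (∑ u, F P' v0 u) < N := by
    rw [hSP']
    have := hwmul j
    have := hwpos j
    have hle : d j * w j ≤ ks j * w j := Nat.mul_le_mul_right _ hj
    nlinarith
  -- the diagonal-free part is unchanged
  have hT : (∑ v ∈ Finset.univ.erase v0, ∑ u ∈ Finset.univ.erase v0, F P' v u)
      = (∑ v ∈ Finset.univ.erase v0, ∑ u ∈ Finset.univ.erase v0, F P v u) := by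
    apply Finset.sum_congr rfl
    intro v hv
    apply Finset.sum_congr rfl
    intro u hu
    simp only [hF, hP'def,
      Function.update_of_ne (Finset.ne_of_mem_erase hu),
      Function.update_of_ne (Finset.ne_of_mem_erase hv)]
  have hlt : (∑ v, ∑ u, F P' v u) < (∑ v, ∑ u, F P v u) := by
    rw [hdecomp P' v0, hdecomp P v0, hT]
    have := hSPbig
    have := hSP'small
    omega
  exact absurd (hP P') (not_le.mpr hlt)
end

section
/- Let d ≥ 2 be even and let G = (V, E) be a finite simple graph with maximum degree at most d. Then there is a partition V = V_1 ∪ ⋯ ∪ V_{d/2} into d/2 pairwise disjoint parts such that: the induced subgraph G[V_i] has maximum degree at most 1 for every 1 ≤ i < d/2; the induced subgraph G[V_{d/2}] has maximum degree at most 2; and every vertex v ∈ V_{d/2} that has exactly 2 neighbours in V_{d/2} has exactly 2 neighbours in each part V_i, i = 1, …, d/2. -/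
def nbrCountIn {V : Type*} [Fintype V] (G : SimpleGraph V) [DecidableRel G.Adj]
    {α : ℕ} (P : V → Fin α) (v : V) (i : Fin α) : ℕ :=
  ((G.neighborFinset v).filter (fun u => P u = i)).card

section aux
variable {V : Type*} [DecidableEq V]

lemma filter_card_eq (s : Finset V) (p : V → Prop) [DecidablePred p] (v : V) :
    (s.filter p).card = ((s.erase v).filter p).card + (if v ∈ s ∧ p v then 1 else 0) := by
  rw [Finset.filter_erase]
  by_cases h : v ∈ s ∧ p v
  · rw [if_pos h, Finset.card_erase_of_mem (Finset.mem_filter.mpr ⟨h.1, h.2⟩)]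
    have : 0 < (s.filter p).card := Finset.card_pos.mpr ⟨v, Finset.mem_filter.mpr ⟨h.1, h.2⟩⟩
    omega
  · rw [if_neg h, add_zero, Finset.erase_eq_of_notMem]
    simp only [Finset.mem_filter]
    tauto

end aux

section aux2
variable {V : Type*} [Fintype V] [DecidableEq V] {α : ℕ}
variable (G : SimpleGraph V) [DecidableRel G.Adj]

lemma nbrCountIn_update_self (P : V → Fin α) (v : V) (j : Fin α) (c : Fin α) :
    nbrCountIn G (Function.update P v j) v c = nbrCountIn G P v c := by
  unfold nbrCountIn
  apply congrArg
  apply Finset.filter_congr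
  intro u hu
  rw [SimpleGraph.mem_neighborFinset] at hu
  rw [Function.update_of_ne (G.ne_of_adj hu).symm]

lemma nbrCountIn_update (P : V → Fin α) (v : V) (j : Fin α) (u : V) (hu : u ≠ v) (c : Fin α) :
    nbrCountIn G (Function.update P v j) u c + (if G.Adj u v ∧ P v = c then 1 else 0)
      = nbrCountIn G P u c + (if G.Adj u v ∧ j = c then 1 else 0) := by
  unfold nbrCountIn
  rw [filter_card_eq (G.neighborFinset u) _ v, filter_card_eq (G.neighborFinset u) (fun x => P x = c) v]
  have herase : ((G.neighborFinset u).erase v).filter (fun x => Function.update P v j x = c)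
      = ((G.neighborFinset u).erase v).filter (fun x => P x = c) := by
    apply Finset.filter_congr
    intro x hx
    rw [Function.update_of_ne (Finset.ne_of_mem_erase hx)]
  rw [herase, Function.update_self]
  simp only [SimpleGraph.mem_neighborFinset]
  omega

end aux2

section aux3
variable {V : Type*} [Fintype V] [DecidableEq V] {α : ℕ}
variable (G : SimpleGraph V) [DecidableRel G.Adj] (w : Fin α → ℕ)

def Phi (P : V → Fin α) : ℕ := ∑ u, w (P u) * nbrCountIn G P u (P u)

lemma sum_indicator (P : V → Fin α) (v : V) (c : Fin α) :
    ∑ u, w (P u) * (if G.Adj u v ∧ c = P u then 1 else 0) = w c * nbrCountIn G P v c := by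
  have h1 : ∀ u : V, w (P u) * (if G.Adj u v ∧ c = P u then 1 else 0)
      = w c * (if G.Adj u v ∧ c = P u then 1 else 0) := by
    intro u
    by_cases h : G.Adj u v ∧ c = P u
    · rw [h.2]
    · simp [h]
  simp only [h1]
  rw [← Finset.mul_sum]
  congr 1
  rw [Finset.sum_boole]
  unfold nbrCountIn
  rw [Nat.cast_id]
  congr 1
  ext u
  simp only [Finset.mem_filter, Finset.mem_univ, true_and, SimpleGraph.mem_neighborFinset]
  rw [G.adj_comm]
  tauto

end aux3

section aux4
variable {V : Type*} [Fintype V] [DecidableEq V] {α : ℕ}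
variable (G : SimpleGraph V) [DecidableRel G.Adj] (w : Fin α → ℕ)

lemma phi_update (P : V → Fin α) (v : V) (j : Fin α) :
    Phi G w (Function.update P v j) + 2 * (w (P v) * nbrCountIn G P v (P v))
      = Phi G w P + 2 * (w j * nbrCountIn G P v j) := by
  set P' := Function.update P v j with hP'
  have hPu : ∀ u ∈ Finset.univ.erase v, P' u = P u := by
    intro u hu
    exact Function.update_of_ne (Finset.ne_of_mem_erase hu) _ _
  -- pointwise key identity on erase v
  have key : ∀ u ∈ Finset.univ.erase v,
      w (P u) * nbrCountIn G P' u (P u) + w (P u) * (if G.Adj u v ∧ P v = P u then 1 else 0)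
        = w (P u) * nbrCountIn G P u (P u) + w (P u) * (if G.Adj u v ∧ j = P u then 1 else 0) := by
    intro u hu
    rw [← Nat.mul_add, ← Nat.mul_add, nbrCountIn_update G P v j u (Finset.ne_of_mem_erase hu)]
  have hsum := Finset.sum_congr rfl key
  rw [Finset.sum_add_distrib, Finset.sum_add_distrib] at hsum
  -- extend indicator sums to univ
  have hext : ∀ c : Fin α,
      ∑ u ∈ Finset.univ.erase v, w (P u) * (if G.Adj u v ∧ c = P u then 1 else 0)
        = w c * nbrCountIn G P v c := by
    intro c
    rw [← sum_indicator G w P v c]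
    rw [← Finset.add_sum_erase _ _ (Finset.mem_univ v)]
    simp [G.irrefl]
  have hi := hext (P v)
  have hj := hext j
  -- rewrite indicator orientation: P v = P u vs (P v) = P u : same
  rw [hi, hj] at hsum
  -- Phi decompositions
  have hphi : Phi G w P = w (P v) * nbrCountIn G P v (P v)
      + ∑ u ∈ Finset.univ.erase v, w (P u) * nbrCountIn G P u (P u) := by
    rw [Phi, ← Finset.add_sum_erase _ _ (Finset.mem_univ v)]
  have hphi' : Phi G w P' = w j * nbrCountIn G P v j
      + ∑ u ∈ Finset.univ.erase v, w (P u) * nbrCountIn G P' u (P u) := by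
    rw [Phi, ← Finset.add_sum_erase _ _ (Finset.mem_univ v)]
    congr 1
    · rw [hP', Function.update_self, nbrCountIn_update_self]
    · exact Finset.sum_congr rfl fun u hu => by rw [hPu u hu]
  omega

end aux4

section aux5
variable {V : Type*} [Fintype V] [DecidableEq V] {α : ℕ}

lemma partcount_update (P : V → Fin α) (v : V) (j : Fin α) (c : Fin α) :
    (Finset.univ.filter (fun u => Function.update P v j u = c)).card
        + (if P v = c then 1 else 0)
      = (Finset.univ.filter (fun u => P u = c)).card + (if j = c then 1 else 0) := by
  rw [filter_card_eq Finset.univ (fun u => Function.update P v j u = c) v,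
    filter_card_eq Finset.univ (fun u => P u = c) v]
  have herase : (Finset.univ.erase v).filter (fun x => Function.update P v j x = c)
      = (Finset.univ.erase v).filter (fun x => P x = c) := by
    apply Finset.filter_congr
    intro x hx
    rw [Function.update_of_ne (Finset.ne_of_mem_erase hx)]
  rw [herase, Function.update_self]
  simp only [Finset.mem_univ, true_and]
  omega

lemma arith1 (M q q' c c' A B : ℕ) (h1 : q' + A = q + B)
    (h2 : M * q + c ≤ M * q' + c') (h3 : c' < M) : A ≤ B := by
  by_contra h
  have hq : q' + 1 ≤ q := by omega
  have hm : M * (q' + 1) ≤ M * q := Nat.mul_le_mul_left M hq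
  rw [Nat.mul_add, Nat.mul_one] at hm
  have : M * q + c ≤ M * q' + c' := h2
  have h4 : M * q' + c' < M * q' + M := Nat.add_lt_add_left h3 _
  have h5 : M * q + c < M * q := lt_of_le_of_lt this (lt_of_lt_of_le h4 hm)
  exact absurd h5 (by simp)

lemma arith2 (M q q' c c' A B : ℕ) (h1 : q' + A = q + B)
    (h2 : M * q + c ≤ M * q' + c') (h4 : c' + 1 = c) (hAB : A = B) : False := by
  have hq : q' = q := by omega
  rw [hq] at h2
  have := Nat.le_of_add_le_add_left h2
  omega

lemma sum_nbrCountIn (G : SimpleGraph V) [DecidableRel G.Adj] (P : V → Fin α) (v : V) :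
    ∑ c : Fin α, nbrCountIn G P v c = G.degree v := by
  rw [SimpleGraph.degree, Finset.card_eq_sum_card_fiberwise
    (f := P) (t := Finset.univ) (fun x _ => Finset.mem_univ _)]
  rfl

end aux5

theorem stmt_9 {V : Type*} [Fintype V] (d : ℕ) (hd : 2 ≤ d) (heven : Even d)
    (G : SimpleGraph V) [DecidableRel G.Adj] (hdeg : ∀ v : V, G.degree v ≤ d) :
    ∃ P : V → Fin (d / 2),
      (∀ v : V, (P v).val < d / 2 - 1 → nbrCountIn G P v (P v) ≤ 1) ∧
      (∀ v : V, (P v).val = d / 2 - 1 → nbrCountIn G P v (P v) ≤ 2) ∧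
      (∀ v : V, (P v).val = d / 2 - 1 → nbrCountIn G P v (P v) = 2 →
        ∀ i : Fin (d / 2), nbrCountIn G P v i = 2) := by
  classical
  set k := d / 2 with hkdef
  have hdk : d = 2 * k := by
    obtain ⟨m, hm⟩ := heven
    omega
  have hk1 : 1 ≤ k := by omega
  set last : Fin k := ⟨k - 1, by omega⟩ with hlast
  set w : Fin k → ℕ := fun i => if i = last then 1 else 2 with hw
  set M : ℕ := Fintype.card V + 1 with hM
  set F : (V → Fin k) → ℕ := fun P =>
    M * Phi G w P + (Finset.univ.filter (fun u => P u = last)).card with hF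
  obtain ⟨P, _, hmin⟩ := Finset.exists_min_image Finset.univ F
    ⟨fun _ => last, Finset.mem_univ _⟩
  have key1 : ∀ (v : V) (j : Fin k),
      w (P v) * nbrCountIn G P v (P v) ≤ w j * nbrCountIn G P v j := by
    intro v j
    have h1 := phi_update G w P v j
    have h2 := hmin (Function.update P v j) (Finset.mem_univ _)
    have h3 : (Finset.univ.filter (fun u => Function.update P v j u = last)).card < M := by
      have := Finset.card_filter_le Finset.univ (fun u => Function.update P v j u = last)
      simp only [Finset.card_univ] at this
      omega
    have := arith1 M (Phi G w P) (Phi G w (Function.update P v j)) _ _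
      (2 * (w (P v) * nbrCountIn G P v (P v))) (2 * (w j * nbrCountIn G P v j)) h1 h2 h3
    omega
  have key2 : ∀ (v : V) (j : Fin k), P v = last → j ≠ last →
      w (P v) * nbrCountIn G P v (P v) < w j * nbrCountIn G P v j := by
    intro v j hv hj
    rcases Nat.lt_or_ge (w (P v) * nbrCountIn G P v (P v)) (w j * nbrCountIn G P v j) with h | h
    · exact h
    exfalso
    have heq : w (P v) * nbrCountIn G P v (P v) = w j * nbrCountIn G P v j :=
      le_antisymm (key1 v j) h
    have h1 := phi_update G w P v j
    have h2 := hmin (Function.update P v j) (Finset.mem_univ _)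
    have hcc := partcount_update P v j last
    rw [if_pos hv, if_neg hj, add_zero] at hcc
    exact arith2 M (Phi G w P) (Phi G w (Function.update P v j)) _ _
      (2 * (w (P v) * nbrCountIn G P v (P v))) (2 * (w j * nbrCountIn G P v j)) h1 h2 hcc
      (by omega)
  have hsum : ∀ v : V, ∑ c : Fin k, nbrCountIn G P v c ≤ 2 * k := by
    intro v
    rw [sum_nbrCountIn]
    calc G.degree v ≤ d := hdeg v
      _ = 2 * k := hdk
  have hwlast : w last = 1 := by simp [hw]
  have hwother : ∀ j : Fin k, j ≠ last → w j = 2 := by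
    intro j hj; simp [hw, hj]
  have hcard_erase : ∀ i : Fin k, (Finset.univ.erase i).card = k - 1 := by
    intro i
    rw [Finset.card_erase_of_mem (Finset.mem_univ i), Finset.card_univ, Fintype.card_fin]
  have hsplit : ∀ (v : V) (i : Fin k),
      nbrCountIn G P v i + ∑ c ∈ Finset.univ.erase i, nbrCountIn G P v c
        = ∑ c : Fin k, nbrCountIn G P v c := by
    intro v i
    exact Finset.add_sum_erase _ _ (Finset.mem_univ i)
  refine ⟨P, ?_, ?_, ?_⟩
  · -- parts before last induce matchings
    intro v hv
    have hvne : P v ≠ last := by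
      intro h
      rw [h] at hv
      simp only [hlast] at hv
      omega
    by_contra hcon
    have h2 : 2 ≤ nbrCountIn G P v (P v) := by omega
    have hwv : w (P v) = 2 := hwother _ hvne
    have hlow : ∀ j ∈ Finset.univ.erase last, 2 ≤ nbrCountIn G P v j := by
      intro j hj
      have hjne := Finset.ne_of_mem_erase hj
      have := key1 v j
      rw [hwv, hwother j hjne] at this
      omega
    have hlastlow : 4 ≤ nbrCountIn G P v last := by
      have := key1 v last
      rw [hwv, hwlast, one_mul] at this
      omega
    have hbound := Finset.card_nsmul_le_sum (Finset.univ.erase last)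
      (fun c => nbrCountIn G P v c) 2 hlow
    rw [hcard_erase last, smul_eq_mul] at hbound
    have := hsplit v last
    have := hsum v
    omega
  · -- last part induces max degree ≤ 2
    intro v hv
    have hvl : P v = last := Fin.ext hv
    by_contra hcon
    have h3 : 3 ≤ nbrCountIn G P v (P v) := by omega
    have hlow : ∀ j ∈ Finset.univ.erase last, 2 ≤ nbrCountIn G P v j := by
      intro j hj
      have hjne := Finset.ne_of_mem_erase hj
      have := key1 v j
      rw [hvl, hwlast, one_mul, hwother j hjne] at this
      rw [hvl] at h3
      omega
    have hbound := Finset.card_nsmul_le_sum (Finset.univ.erase last)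
      (fun c => nbrCountIn G P v c) 2 hlow
    rw [hcard_erase last, smul_eq_mul] at hbound
    have hsp := hsplit v last
    have hs := hsum v
    rw [hvl] at h3
    omega
  · -- regularity condition
    intro v hv h2 i
    have hvl : P v = last := Fin.ext hv
    rw [hvl] at h2
    have hlow : ∀ j : Fin k, 2 ≤ nbrCountIn G P v j := by
      intro j
      by_cases hj : j = last
      · rw [hj, h2]
      · have := key2 v j hvl hj
        rw [hvl, hwlast, one_mul, h2, hwother j hj] at this
        omega
    have hbound := Finset.card_nsmul_le_sum (Finset.univ.erase i)
      (fun c => nbrCountIn G P v c) 2 (fun j _ => hlow j)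
    rw [hcard_erase i, smul_eq_mul] at hbound
    have hsp := hsplit v i
    have hs := hsum v
    have := hlow i
    omega
end

section
/- Let d ≥ 5 be odd and let G = (V, E) be a finite simple graph with maximum degree at most d. Set m = (d−1)/2. Then there is a partition V = V_1 ∪ ⋯ ∪ V_m into m pairwise disjoint parts such that: the induced subgraph G[V_i] has maximum degree at most 1 for every 1 ≤ i ≤ m − 2; the induced subgraphs G[V_{m−1}] and G[V_m] have maximum degree at most 2; every vertex of V_{m−1} with exactly 2 neighbours in V_{m−1} has exactly 2 neighbours in each V_i with i ≤ m − 2 and exactly 3 neighbours in V_m; and every vertex of V_m with exactly 2 neighbours in V_m has at least 2 neighbours in each V_i with i ≤ m − 1 and at most 3 neighbours in V_{m−1}. -/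
lemma exists_min_part {V : Type*} [Fintype V] (G : SimpleGraph V) [DecidableRel G.Adj]
    {m : ℕ} (hm : 0 < m) (c : Fin m → ℕ) :
    ∃ P : V → Fin m, ∀ (v : V) (k : Fin m),
      c (P v) * nbrCountIn G P v (P v) ≤ c k * nbrCountIn G P v k := by
  classical
  have hne : Nonempty (Fin m) := ⟨⟨0, hm⟩⟩
  set S : Finset (V × V) := Finset.univ.filter (fun p => G.Adj p.1 p.2) with hS
  set q : (V → Fin m) → V × V → ℕ :=
    fun Q p => if Q p.1 = Q p.2 then c (Q p.1) else 0 with hq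
  obtain ⟨P, -, hPmin⟩ := Finset.exists_min_image (Finset.univ : Finset (V → Fin m))
    (fun Q => ∑ p ∈ S, q Q p) ⟨Classical.arbitrary _, Finset.mem_univ _⟩
  refine ⟨P, fun v k => ?_⟩
  have hgen : ∀ (Q : V → Fin m), (∀ u, u ≠ v → Q u = P u) →
      ∑ p ∈ S, q Q p
        = 2 * (c (Q v) * nbrCountIn G P v (Q v))
          + ∑ p ∈ S.filter (fun p => ¬ p.1 = v ∧ ¬ p.2 = v), q P p := by
    intro Q hQ
    -- membership in S
    have hmemS : ∀ a b : V, (a, b) ∈ S ↔ G.Adj a b := by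
      intro a b; simp [hS]
    -- sum over pairs with first coordinate v
    have himg1 : S.filter (fun p => p.1 = v)
        = (G.neighborFinset v).image (fun w => (v, w)) := by
      ext ⟨a, b⟩
      simp only [Finset.mem_filter, hmemS, Finset.mem_image,
        SimpleGraph.mem_neighborFinset, Prod.mk.injEq]
      constructor
      · rintro ⟨hadj, rfl⟩; exact ⟨b, hadj, rfl, rfl⟩
      · rintro ⟨w, hadj, rfl, rfl⟩; exact ⟨hadj, rfl⟩
    have himg2 : S.filter (fun p => p.2 = v)
        = (G.neighborFinset v).image (fun w => (w, v)) := by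
      ext ⟨a, b⟩
      simp only [Finset.mem_filter, hmemS, Finset.mem_image,
        SimpleGraph.mem_neighborFinset, Prod.mk.injEq]
      constructor
      · rintro ⟨hadj, rfl⟩; exact ⟨a, hadj.symm, rfl, rfl⟩
      · rintro ⟨w, hadj, rfl, rfl⟩; exact ⟨hadj.symm, rfl⟩
    have hqval : ∀ w ∈ G.neighborFinset v,
        q Q (v, w) = (if P w = Q v then c (Q v) else 0) ∧
        q Q (w, v) = (if P w = Q v then c (Q v) else 0) := by
      intro w hw
      have hadj : G.Adj v w := (SimpleGraph.mem_neighborFinset _ _ _).mp hw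
      have hwv : w ≠ v := fun h => G.irrefl (h ▸ hadj)
      have hQw : Q w = P w := hQ w hwv
      constructor
      · simp only [hq, hQw]
        by_cases h : P w = Q v
        · rw [if_pos h.symm, if_pos h]
        · rw [if_neg (fun hh => h hh.symm), if_neg h]
      · simp only [hq, hQw]
        by_cases h : P w = Q v
        · simp [h]
        · simp [h]
    have hA : ∑ p ∈ S.filter (fun p => p.1 = v), q Q p
        = c (Q v) * nbrCountIn G P v (Q v) := by
      rw [himg1, Finset.sum_image (by intro x _ y _ h; exact (Prod.mk.injEq _ _ _ _).mp h |>.2)]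
      rw [Finset.sum_congr rfl (fun w hw => (hqval w hw).1), ← Finset.sum_filter,
        Finset.sum_const, smul_eq_mul, mul_comm]
      rfl
    have hB : ∑ p ∈ S.filter (fun p => p.2 = v), q Q p
        = c (Q v) * nbrCountIn G P v (Q v) := by
      rw [himg2, Finset.sum_image (by intro x _ y _ h; exact (Prod.mk.injEq _ _ _ _).mp h |>.1)]
      rw [Finset.sum_congr rfl (fun w hw => (hqval w hw).2), ← Finset.sum_filter,
        Finset.sum_const, smul_eq_mul, mul_comm]
      rfl
    have hC : ∑ p ∈ S.filter (fun p => ¬ p.1 = v ∧ ¬ p.2 = v), q Q p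
        = ∑ p ∈ S.filter (fun p => ¬ p.1 = v ∧ ¬ p.2 = v), q P p := by
      apply Finset.sum_congr rfl
      intro p hp
      simp only [Finset.mem_filter] at hp
      simp only [hq, hQ p.1 hp.2.1, hQ p.2 hp.2.2]
    -- decomposition
    have e0 := Finset.sum_filter_add_sum_filter_not S (fun p => p.1 = v) (q Q)
    have e1 := Finset.sum_filter_add_sum_filter_not
      (S.filter (fun p => ¬ p.1 = v)) (fun p => p.2 = v) (q Q)
    have e2 : (S.filter (fun p => ¬ p.1 = v)).filter (fun p => p.2 = v)
        = S.filter (fun p => p.2 = v) := by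
      rw [Finset.filter_filter]
      apply Finset.filter_congr
      intro p hp
      have hadj : G.Adj p.1 p.2 := by
        have := hp; rw [hS, Finset.mem_filter] at this; exact this.2
      constructor
      · rintro ⟨-, h⟩; exact h
      · intro h
        refine ⟨fun h1 => ?_, h⟩
        exact G.irrefl (by rw [h1, h] at hadj; exact hadj)
    have e3 : (S.filter (fun p => ¬ p.1 = v)).filter (fun p => ¬ p.2 = v)
        = S.filter (fun p => ¬ p.1 = v ∧ ¬ p.2 = v) := by
      rw [Finset.filter_filter]
    rw [← e0, ← e1, e2, e3, hA, hB, hC]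
    ring
  have hP' : ∀ u, u ≠ v → Function.update P v k u = P u :=
    fun u hu => Function.update_of_ne hu k P
  have h1 := hgen P (fun u _ => rfl)
  have h2 := hgen (Function.update P v k) hP'
  rw [Function.update_self] at h2
  have hle : ∑ p ∈ S, q P p ≤ ∑ p ∈ S, q (Function.update P v k) p :=
    hPmin (Function.update P v k) (Finset.mem_univ _)
  rw [h1, h2] at hle
  omega

/-- Parts are indexed by `Fin ((d-1)/2)`, with index `i : Fin m` corresponding to the part
`V_{i+1}`; so `V_{m-1}` has index value `m - 2` and `V_m` has index value `m - 1`. -/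
theorem stmt_10 {V : Type*} [Fintype V] (d : ℕ) (hd : 5 ≤ d) (hodd : Odd d)
    (G : SimpleGraph V) [DecidableRel G.Adj] (hdeg : ∀ v : V, G.degree v ≤ d) :
    ∃ P : V → Fin ((d - 1) / 2),
      -- parts V_i, 1 ≤ i ≤ m − 2, have maximum degree at most 1
      (∀ v : V, (P v).val < (d - 1) / 2 - 2 → nbrCountIn G P v (P v) ≤ 1) ∧
      -- part V_{m−1} has maximum degree at most 2
      (∀ v : V, (P v).val = (d - 1) / 2 - 2 → nbrCountIn G P v (P v) ≤ 2) ∧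
      -- part V_m has maximum degree at most 2
      (∀ v : V, (P v).val = (d - 1) / 2 - 1 → nbrCountIn G P v (P v) ≤ 2) ∧
      -- a vertex of V_{m−1} with exactly 2 neighbours in V_{m−1} has exactly 2 neighbours in
      -- each V_i, i ≤ m − 2, and exactly 3 neighbours in V_m
      (∀ v : V, (P v).val = (d - 1) / 2 - 2 → nbrCountIn G P v (P v) = 2 →
        (∀ i : Fin ((d - 1) / 2), i.val < (d - 1) / 2 - 2 → nbrCountIn G P v i = 2) ∧
        (∀ i : Fin ((d - 1) / 2), i.val = (d - 1) / 2 - 1 → nbrCountIn G P v i = 3)) ∧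
      -- a vertex of V_m with exactly 2 neighbours in V_m has at least 2 neighbours in each V_i,
      -- i ≤ m − 1, and at most 3 neighbours in V_{m−1}
      (∀ v : V, (P v).val = (d - 1) / 2 - 1 → nbrCountIn G P v (P v) = 2 →
        (∀ i : Fin ((d - 1) / 2), i.val < (d - 1) / 2 - 1 → 2 ≤ nbrCountIn G P v i) ∧
        (∀ i : Fin ((d - 1) / 2), i.val = (d - 1) / 2 - 2 → nbrCountIn G P v i ≤ 3)) := by
  classical
  obtain ⟨r, hr⟩ := hodd
  set m := (d - 1) / 2 with hmdef
  have hdm : d = 2 * m + 1 := by omega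
  have hm2 : 2 ≤ m := by omega
  set c : Fin m → ℕ :=
    fun i => if (i : ℕ) = m - 1 then 3 else if (i : ℕ) = m - 2 then 4 else 5 with hc
  have hc5 : ∀ i : Fin m, (i : ℕ) ≠ m - 2 → (i : ℕ) ≠ m - 1 → c i = 5 := by
    intro i h1 h2; simp only [hc]; rw [if_neg h2, if_neg h1]
  have hc4 : ∀ i : Fin m, (i : ℕ) = m - 2 → c i = 4 := by
    intro i h1; simp only [hc]; rw [if_neg (by omega), if_pos h1]
  have hc3 : ∀ i : Fin m, (i : ℕ) = m - 1 → c i = 3 := by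
    intro i h1; simp only [hc]; rw [if_pos h1]
  obtain ⟨P, key⟩ := exists_min_part G (by omega : 0 < m) c
  set x2 : Fin m := ⟨m - 2, by omega⟩ with hx2
  set x1 : Fin m := ⟨m - 1, by omega⟩ with hx1
  have hx21 : x2 ≠ x1 := by
    simp only [hx2, hx1, ne_eq, Fin.mk.injEq]; omega
  set T : Finset (Fin m) := Finset.univ \ {x2, x1} with hT
  have hmemT : ∀ i : Fin m, i ∈ T ↔ (i : ℕ) ≠ m - 2 ∧ (i : ℕ) ≠ m - 1 := by
    intro i
    simp only [hT, Finset.mem_sdiff, Finset.mem_univ, true_and, Finset.mem_insert,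
      Finset.mem_singleton, hx2, hx1, Fin.ext_iff, not_or]
  have hcardT : T.card = m - 2 := by
    rw [hT, Finset.card_sdiff_of_subset (Finset.subset_univ _), Finset.card_pair hx21,
      Finset.card_univ, Fintype.card_fin]
  have hdegsum : ∀ v : V, ∑ i : Fin m, nbrCountIn G P v i = G.degree v := by
    intro v
    unfold nbrCountIn
    rw [← Finset.card_eq_sum_card_fiberwise (fun x _ => Finset.mem_univ (P x))]
    exact G.card_neighborFinset_eq_degree v
  have hsplit : ∀ v : V,
      (∑ i ∈ T, nbrCountIn G P v i) + nbrCountIn G P v x2 + nbrCountIn G P v x1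
        ≤ 2 * m + 1 := by
    intro v
    have hsum := Finset.sum_sdiff (f := nbrCountIn G P v)
      (Finset.subset_univ ({x2, x1} : Finset (Fin m)))
    rw [Finset.sum_pair hx21] at hsum
    have h1 := hdegsum v
    have h2 := hdeg v
    rw [← hT] at hsum
    omega
  have hTlow : ∀ v : V, (∀ i ∈ T, 2 ≤ nbrCountIn G P v i) →
      2 * (m - 2) ≤ ∑ i ∈ T, nbrCountIn G P v i := by
    intro v h
    have hh : T.card • 2 ≤ ∑ i ∈ T, nbrCountIn G P v i :=
      Finset.card_nsmul_le_sum T _ 2 h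
    rw [hcardT, smul_eq_mul] at hh
    omega
  refine ⟨P, ?_, ?_, ?_, ?_, ?_⟩
  · -- bullet 1
    intro v hv
    by_contra hcon
    push_neg at hcon
    have hc5v : c (P v) = 5 := hc5 _ (by omega) (by omega)
    have h10 : ∀ k, 10 ≤ c k * nbrCountIn G P v k := by
      intro k
      exact le_trans (by rw [hc5v]; omega) (key v k)
    have hT2 : ∀ i ∈ T, 2 ≤ nbrCountIn G P v i := by
      intro i hi
      have h := h10 i
      rw [hc5 i ((hmemT i).mp hi).1 ((hmemT i).mp hi).2] at h
      omega
    have ha : 3 ≤ nbrCountIn G P v x2 := by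
      have h := h10 x2; rw [hc4 x2 rfl] at h; omega
    have hb : 4 ≤ nbrCountIn G P v x1 := by
      have h := h10 x1; rw [hc3 x1 rfl] at h; omega
    have h1 := hTlow v hT2
    have h2 := hsplit v
    omega
  · -- bullet 2
    intro v hv
    have hPv : P v = x2 := Fin.ext hv
    rw [hPv]
    by_contra hcon
    push_neg at hcon
    have h12 : ∀ k, 12 ≤ c k * nbrCountIn G P v k := by
      intro k
      have h := key v k
      rw [hPv, hc4 x2 rfl] at h
      exact le_trans (by omega) h
    have hT2 : ∀ i ∈ T, 2 ≤ nbrCountIn G P v i := by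
      intro i hi
      have h := h12 i
      rw [hc5 i ((hmemT i).mp hi).1 ((hmemT i).mp hi).2] at h
      omega
    have hb : 4 ≤ nbrCountIn G P v x1 := by
      have h := h12 x1; rw [hc3 x1 rfl] at h; omega
    have h1 := hTlow v hT2
    have h2 := hsplit v
    omega
  · -- bullet 3
    intro v hv
    have hPv : P v = x1 := Fin.ext hv
    rw [hPv]
    by_contra hcon
    push_neg at hcon
    have h9 : ∀ k, 9 ≤ c k * nbrCountIn G P v k := by
      intro k
      have h := key v k
      rw [hPv, hc3 x1 rfl] at h
      exact le_trans (by omega) h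
    have hT2 : ∀ i ∈ T, 2 ≤ nbrCountIn G P v i := by
      intro i hi
      have h := h9 i
      rw [hc5 i ((hmemT i).mp hi).1 ((hmemT i).mp hi).2] at h
      omega
    have ha : 3 ≤ nbrCountIn G P v x2 := by
      have h := h9 x2; rw [hc4 x2 rfl] at h; omega
    have h1 := hTlow v hT2
    have h2 := hsplit v
    omega
  · -- bullet 4
    intro v hv h2
    have hPv : P v = x2 := Fin.ext hv
    rw [hPv] at h2
    have h8 : ∀ k, 8 ≤ c k * nbrCountIn G P v k := by
      intro k
      have h := key v k
      rw [hPv, hc4 x2 rfl, h2] at h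
      exact le_trans (by omega) h
    have hT2 : ∀ i ∈ T, 2 ≤ nbrCountIn G P v i := by
      intro i hi
      have h := h8 i
      rw [hc5 i ((hmemT i).mp hi).1 ((hmemT i).mp hi).2] at h
      omega
    have hb : 3 ≤ nbrCountIn G P v x1 := by
      have h := h8 x1; rw [hc3 x1 rfl] at h; omega
    have hs := hsplit v
    have hTl := hTlow v hT2
    constructor
    · intro i hi
      have hiT : i ∈ T := (hmemT i).mpr ⟨by omega, by omega⟩
      have hsplitT := (Finset.add_sum_erase T (nbrCountIn G P v) hiT).symm
      have hel : (T.erase i).card • 2 ≤ ∑ x ∈ T.erase i, nbrCountIn G P v x :=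
        Finset.card_nsmul_le_sum (T.erase i) _ 2
          (fun j hj => hT2 j (Finset.mem_of_mem_erase hj))
      rw [Finset.card_erase_of_mem hiT, hcardT, smul_eq_mul] at hel
      have hlo := hT2 i hiT
      omega
    · intro i hi
      have : i = x1 := Fin.ext hi
      subst this
      omega
  · -- bullet 5
    intro v hv h2
    have hPv : P v = x1 := Fin.ext hv
    rw [hPv] at h2
    have h6 : ∀ k, 6 ≤ c k * nbrCountIn G P v k := by
      intro k
      have h := key v k
      rw [hPv, hc3 x1 rfl, h2] at h
      exact le_trans (by omega) h
    have hT2 : ∀ i ∈ T, 2 ≤ nbrCountIn G P v i := by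
      intro i hi
      have h := h6 i
      rw [hc5 i ((hmemT i).mp hi).1 ((hmemT i).mp hi).2] at h
      omega
    have ha : 2 ≤ nbrCountIn G P v x2 := by
      have h := h6 x2; rw [hc4 x2 rfl] at h; omega
    have hs := hsplit v
    have hTl := hTlow v hT2
    constructor
    · intro i hi
      by_cases hcase : (i : ℕ) = m - 2
      · have : i = x2 := Fin.ext hcase
        subst this
        exact ha
      · exact hT2 i ((hmemT i).mpr ⟨hcase, by omega⟩)
    · intro i hi
      have : i = x2 := Fin.ext hi
      subst this
      omega
end

section
/- Let d ≥ 2, let G be a finite simple graph, and let x be a vertex of G of degree at most d − 2. If the graph G − x obtained by deleting x (and all edges at x) is realizable on the sphere 𝕊^{d−1} of radius 1/√2 in ℝ^d, then G is also realizable on 𝕊^{d−1}. -/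
open scoped RealInnerProductSpace in
theorem stmt_12 {V : Type*} [Fintype V] (d : ℕ) (hd : 2 ≤ d)
    (G : SimpleGraph V) [DecidableRel G.Adj] (x : V) (hx : G.degree x ≤ d - 2)
    (h : SphereRealizable (G.induce {v : V | v ≠ x}) d) :
    SphereRealizable G d := by
  classical
  obtain ⟨f, hf_inj, hf_norm, hf_dist⟩ := h
  -- the finset of neighbors of x, as elements of the subtype
  let Nb : Finset ↥{v : V | v ≠ x} := Finset.univ.filter (fun v => G.Adj x ↑v)
  have hNbcard : Nb.card ≤ d - 2 := by
    refine le_trans ?_ hx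
    rw [SimpleGraph.degree]
    refine Finset.card_le_card_of_injOn (fun a => (a : V)) ?_ ?_
    · intro a ha
      simp [Nb] at ha
      simpa using ha
    · intro a _ b _ hab
      exact Subtype.ext hab
  let T : Finset (EuclideanSpace ℝ (Fin d)) := Nb.image f
  set W : Submodule ℝ (EuclideanSpace ℝ (Fin d)) := Submodule.span ℝ (T : Set _) with hW
  have hWrank : Module.finrank ℝ W ≤ d - 2 := by
    refine le_trans ?_ (le_trans (Finset.card_image_le (f := f) (s := Nb)) hNbcard)
    exact finrank_span_finset_le_card T
  have hsum : Module.finrank ℝ W + Module.finrank ℝ Wᗮ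
      = Module.finrank ℝ (EuclideanSpace ℝ (Fin d)) :=
    Submodule.finrank_add_finrank_orthogonal W
  rw [finrank_euclideanSpace_fin] at hsum
  have hWo : 2 ≤ Module.finrank ℝ ↥Wᗮ := by omega
  -- orthonormal pair in Wᗮ
  let b := stdOrthonormalBasis ℝ ↥Wᗮ
  let u : EuclideanSpace ℝ (Fin d) := (b ⟨0, by omega⟩ : ↥Wᗮ)
  let w : EuclideanSpace ℝ (Fin d) := (b ⟨1, by omega⟩ : ↥Wᗮ)
  have hu : u ∈ Wᗮ := (b ⟨0, by omega⟩).2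
  have hw : w ∈ Wᗮ := (b ⟨1, by omega⟩).2
  have hun : ‖u‖ = 1 := by
    rw [show ‖u‖ = ‖b ⟨0, by omega⟩‖ from rfl, b.orthonormal.1 ⟨0, by omega⟩]
  have hwn : ‖w‖ = 1 := by
    rw [show ‖w‖ = ‖b ⟨1, by omega⟩‖ from rfl, b.orthonormal.1 ⟨1, by omega⟩]
  have huw : ⟪u, w⟫ = 0 := by
    have := b.orthonormal.2 (i := ⟨0, by omega⟩) (j := ⟨1, by omega⟩) (by simp)
    exact this
  have hwu : ⟪w, u⟫ = 0 := by rw [real_inner_comm]; exact huw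
  -- the circle of candidate points
  let g : ℝ → EuclideanSpace ℝ (Fin d) :=
    fun t => (Real.cos t / Real.sqrt 2) • u + (Real.sin t / Real.sqrt 2) • w
  have hs2 : (0:ℝ) < Real.sqrt 2 := Real.sqrt_pos.2 (by norm_num)
  have hs2' : Real.sqrt 2 * Real.sqrt 2 = 2 := Real.mul_self_sqrt (by norm_num)
  have hgmem : ∀ t, g t ∈ Wᗮ := fun t =>
    Submodule.add_mem _ (Submodule.smul_mem _ _ hu) (Submodule.smul_mem _ _ hw)
  have hgnorm : ∀ t, ‖g t‖ = 1 / Real.sqrt 2 := by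
    intro t
    have hsq : ‖g t‖ ^ 2 = 1 / 2 := by
      show ‖(Real.cos t / Real.sqrt 2) • u + (Real.sin t / Real.sqrt 2) • w‖ ^ 2 = 1 / 2
      rw [norm_add_sq_real, real_inner_smul_left, real_inner_smul_right, huw,
        norm_smul, norm_smul, hun, hwn, mul_one, mul_one, Real.norm_eq_abs,
        Real.norm_eq_abs, sq_abs, sq_abs]
      have hpy := Real.sin_sq_add_cos_sq t
      field_simp
      nlinarith [hpy, hs2']
    have h3 : ‖g t‖ = Real.sqrt (1/2) := by
      rw [← hsq, Real.sqrt_sq (norm_nonneg _)]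
    rw [h3, one_div, one_div, Real.sqrt_inv]
  -- injectivity of g on [0, π)
  have hg_inj : Set.InjOn g (Set.Ico 0 Real.pi) := by
    intro t1 ht1 t2 ht2 hEq
    have hcos : ∀ t, ⟪g t, u⟫ = Real.cos t / Real.sqrt 2 := by
      intro t
      show ⟪(Real.cos t / Real.sqrt 2) • u + (Real.sin t / Real.sqrt 2) • w, u⟫
          = Real.cos t / Real.sqrt 2
      rw [inner_add_left, real_inner_smul_left, real_inner_smul_left, hwu,
        real_inner_self_eq_norm_sq, hun]
      ring
    have hc : Real.cos t1 = Real.cos t2 := by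
      have h1 := hcos t1
      have h2 := hcos t2
      rw [hEq, h2] at h1
      field_simp at h1
      exact h1.symm
    exact Real.injOn_cos ⟨ht1.1, le_of_lt ht1.2⟩ ⟨ht2.1, le_of_lt ht2.2⟩ hc
  -- choose a point not hit by f
  have hinf : (g '' Set.Ico 0 Real.pi).Infinite :=
    (Set.Ico_infinite Real.pi_pos).image hg_inj
  have hne : ((g '' Set.Ico 0 Real.pi) \ Set.range f).Nonempty :=
    (hinf.diff (Set.finite_range f)).nonempty
  obtain ⟨p, hpA, hpR⟩ := hne
  obtain ⟨t, _, rfl⟩ := hpA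
  -- g t is orthogonal to images of neighbors of x
  have hportho : ∀ v : ↥{v : V | v ≠ x}, G.Adj x ↑v → ⟪g t, f v⟫ = 0 := by
    intro v hv
    have hfvW : f v ∈ W := by
      apply Submodule.subset_span
      simp only [T, Finset.coe_image, Set.mem_image]
      exact ⟨v, by simp [Nb, hv], rfl⟩
    have h0 := (Submodule.mem_orthogonal W (g t)).1 (hgmem t) (f v) hfvW
    rw [real_inner_comm]
    exact h0
  -- build the new map
  refine ⟨fun v => if hv : v = x then g t else f ⟨v, hv⟩, ?_, ?_, ?_⟩
  · intro v1 v2 hEq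
    by_cases h1 : v1 = x <;> by_cases h2 : v2 = x
    · rw [h1, h2]
    · exfalso; apply hpR
      simp only [dif_pos h1, dif_neg h2] at hEq
      exact ⟨⟨v2, h2⟩, hEq.symm⟩
    · exfalso; apply hpR
      simp only [dif_neg h1, dif_pos h2] at hEq
      exact ⟨⟨v1, h1⟩, hEq⟩
    · simp only [dif_neg h1, dif_neg h2] at hEq
      exact congrArg Subtype.val (hf_inj hEq)
  · intro v
    by_cases h1 : v = x
    · simp only [dif_pos h1]; exact hgnorm t
    · simp only [dif_neg h1]; exact hf_norm _
  · intro a c hac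
    have hdist : ∀ v : ↥{v : V | v ≠ x}, G.Adj x ↑v → dist (g t) (f v) = 1 := by
      intro v hv
      have horth := hportho v hv
      rw [dist_eq_norm]
      have hsq : ‖g t - f v‖ ^ 2 = 1 := by
        rw [norm_sub_sq_real, hgnorm t, hf_norm v, horth]
        rw [div_pow, Real.sq_sqrt (by norm_num : (0:ℝ) ≤ 2)]
        norm_num
      nlinarith [norm_nonneg (g t - f v)]
    by_cases h1 : a = x <;> by_cases h2 : c = x
    · rw [h1, h2] at hac; exact absurd hac G.irrefl
    · subst h1
      simp only [dif_pos rfl, dif_neg h2]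
      exact hdist ⟨c, h2⟩ hac
    · subst h2
      simp only [dif_neg h1, dif_pos rfl]
      rw [dist_comm]
      exact hdist ⟨a, h1⟩ hac.symm
    · simp only [dif_neg h1, dif_neg h2]
      exact hf_dist ⟨a, h1⟩ ⟨c, h2⟩ hac
end

section
/- Let d ≥ 2 and let G be a finite simple graph that is (d−2)-degenerate, i.e. every nonempty induced subgraph of G has a vertex of degree at most d − 2 in that subgraph. Then G is realizable on the sphere 𝕊^{d−1} of radius 1/√2 in ℝ^d. -/
open RealInnerProductSpace Module

lemma exists_sphere_point {E : Type*} [NormedAddCommGroup E] [InnerProductSpace ℝ E]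
    [FiniteDimensional ℝ E] (W : Submodule ℝ E) (hW : 2 ≤ finrank ℝ W)
    {r : ℝ} (hr : 0 < r) (T : Set E) (hT : T.Finite) :
    ∃ x ∈ W, ‖x‖ = r ∧ x ∉ T := by
  have : FiniteDimensional ℝ W := inferInstance
  set b := stdOrthonormalBasis ℝ W with hb
  have h0 : (0 : ℕ) < finrank ℝ W := by omega
  have h1 : (1 : ℕ) < finrank ℝ W := by omega
  set e1 : E := ((b ⟨0, h0⟩ : W) : E) with he1
  set e2 : E := ((b ⟨1, h1⟩ : W) : E) with he2
  have hne : (⟨0, h0⟩ : Fin (finrank ℝ W)) ≠ ⟨1, h1⟩ := by simp [Fin.ext_iff]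
  have horth : ⟪e1, e2⟫ = 0 := by
    have := b.orthonormal.2 hne
    simpa only [he1, he2, Submodule.coe_inner] using this
  have hn1 : ‖e1‖ = 1 := by simpa only [he1, Submodule.coe_norm] using b.orthonormal.1 ⟨0, h0⟩
  have hn2 : ‖e2‖ = 1 := by simpa only [he2, Submodule.coe_norm] using b.orthonormal.1 ⟨1, h1⟩
  set u : ℝ → E := fun θ => (r * Real.cos θ) • e1 + (r * Real.sin θ) • e2 with hu
  have hmem : ∀ θ, u θ ∈ W := fun θ =>
    W.add_mem (W.smul_mem _ (b ⟨0, h0⟩).2) (W.smul_mem _ (b ⟨1, h1⟩).2)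
  have hnorm : ∀ θ, ‖u θ‖ = r := by
    intro θ
    have hsq : ‖u θ‖ ^ 2 = r ^ 2 := by
      rw [hu]
      rw [norm_add_sq_real, real_inner_smul_left, real_inner_smul_right, horth,
        norm_smul, norm_smul, hn1, hn2]
      have := Real.sin_sq_add_cos_sq θ
      simp only [Real.norm_eq_abs, mul_one]
      rw [sq_abs, sq_abs]
      nlinarith [Real.sin_sq_add_cos_sq θ]
    have := congrArg Real.sqrt hsq
    rwa [Real.sqrt_sq (norm_nonneg _), Real.sqrt_sq hr.le] at this
  have hinj : Set.InjOn u (Set.Icc 0 Real.pi) := by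
    intro a ha c hc hac
    have h21 : ⟪e2, e1⟫ = 0 := by rw [real_inner_comm]; exact horth
    have hia : ∀ θ, ⟪e1, u θ⟫ = r * Real.cos θ := by
      intro θ
      rw [hu]; simp [inner_add_right, real_inner_smul_right, horth, h21,
        real_inner_self_eq_norm_sq, hn1, real_inner_comm e2 e1]
    have hic := hia c
    have : Real.cos a = Real.cos c := by
      have := (hia a).symm.trans (by rw [hac, hic])
      exact mul_left_cancel₀ hr.ne' this
    exact Real.injOn_cos ha hc this
  have hIinf : (Set.Icc (0:ℝ) Real.pi).Infinite := Set.Icc_infinite Real.pi_pos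
  have himg : (u '' Set.Icc 0 Real.pi).Infinite := hIinf.image hinj
  obtain ⟨x, hx1, hx2⟩ := ((himg.diff hT)).nonempty
  obtain ⟨θ, _, rfl⟩ := hx1
  exact ⟨u θ, hmem θ, hnorm θ, hx2⟩

lemma key {V : Type*} [Fintype V] [DecidableEq V] (d : ℕ) (hd : 2 ≤ d)
    (G : SimpleGraph V) [DecidableRel G.Adj]
    (hdegen : ∀ s : Finset V, s.Nonempty →
      ∃ v ∈ s, ((G.neighborFinset v).filter (· ∈ s)).card ≤ d - 2) :
    ∀ s : Finset V, ∃ f : V → EuclideanSpace ℝ (Fin d), Set.InjOn f s ∧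
      (∀ v ∈ s, ‖f v‖ = 1 / Real.sqrt 2) ∧
      ∀ u ∈ s, ∀ w ∈ s, G.Adj u w → ⟪f u, f w⟫ = 0 := by
  classical
  intro s
  induction s using Finset.strongInduction with
  | _ s ih =>
    rcases s.eq_empty_or_nonempty with rfl | hne
    · exact ⟨fun _ => 0, by simp, by simp, by simp⟩
    obtain ⟨v, hvs, hdeg⟩ := hdegen s hne
    obtain ⟨f, hinj, hnorm, horth⟩ := ih (s.erase v) (Finset.erase_ssubset hvs)
    set N := (G.neighborFinset v).filter (· ∈ s) with hN
    set K := Submodule.span ℝ ((N.image f : Set (EuclideanSpace ℝ (Fin d)))) with hK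
    have hKle : finrank ℝ K ≤ d - 2 :=
      le_trans (finrank_span_finset_le_card _) (le_trans Finset.card_image_le hdeg)
    have hdim : finrank ℝ K + finrank ℝ Kᗮ = d := by
      rw [Submodule.finrank_add_finrank_orthogonal]
      simp [finrank_euclideanSpace]
    have hW : 2 ≤ finrank ℝ Kᗮ := by omega
    have hr : (0:ℝ) < 1 / Real.sqrt 2 := by positivity
    obtain ⟨x, hxW, hxnorm, hxT⟩ := exists_sphere_point Kᗮ hW hr
      (f '' (s.erase v : Set V)) ((s.erase v).finite_toSet.image f)
    refine ⟨Function.update f v x, ?_, ?_, ?_⟩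
    · intro a ha b hb hab
      by_cases hav : a = v <;> by_cases hbv : b = v
      · rw [hav, hbv]
      · exfalso
        rw [hav, Function.update_self, Function.update_of_ne hbv] at hab
        exact hxT ⟨b, by simp [Finset.mem_erase, hbv, hb], hab.symm⟩
      · exfalso
        rw [hbv, Function.update_self, Function.update_of_ne hav] at hab
        exact hxT ⟨a, by simp [Finset.mem_erase, hav, ha], hab⟩
      · rw [Function.update_of_ne hav, Function.update_of_ne hbv] at hab
        exact hinj (by simp [Finset.mem_erase, hav, ha]) (by simp [Finset.mem_erase, hbv, hb]) hab
    · intro w hw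
      by_cases hwv : w = v
      · rw [hwv, Function.update_self]; exact hxnorm
      · rw [Function.update_of_ne hwv]
        exact hnorm w (Finset.mem_erase.2 ⟨hwv, hw⟩)
    · have hadj : ∀ w ∈ s, G.Adj v w → ⟪f w, x⟫ = 0 := by
        intro w hws hadj
        have hwN : w ∈ N := by
          rw [hN]; simp [SimpleGraph.mem_neighborFinset, hadj, hws]
        have hfw : f w ∈ K := Submodule.subset_span (by simp [Finset.mem_image]; exact ⟨w, hwN, rfl⟩)
        exact (Submodule.mem_orthogonal K x).1 hxW _ hfw
      intro a ha b hb hab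
      by_cases hav : a = v <;> by_cases hbv : b = v
      · exact absurd (hav ▸ hbv ▸ hab) (G.irrefl)
      · rw [hav, Function.update_self, Function.update_of_ne hbv]
        rw [real_inner_comm]
        exact hadj b hb (hav ▸ hab)
      · rw [hbv, Function.update_self, Function.update_of_ne hav]
        exact hadj a ha (hbv ▸ hab.symm)
      · rw [Function.update_of_ne hav, Function.update_of_ne hbv]
        exact horth a (Finset.mem_erase.2 ⟨hav, ha⟩) b (Finset.mem_erase.2 ⟨hbv, hb⟩) hab

theorem stmt_13 {V : Type*} [Fintype V] [DecidableEq V] (d : ℕ) (hd : 2 ≤ d)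
    (G : SimpleGraph V) [DecidableRel G.Adj]
    -- `G` is `(d−2)`-degenerate: every nonempty (induced) subgraph has a vertex of degree
    -- at most `d − 2` within it
    (hdegen : ∀ s : Finset V, s.Nonempty →
      ∃ v ∈ s, ((G.neighborFinset v).filter (· ∈ s)).card ≤ d - 2) :
    SphereRealizable G d := by
  obtain ⟨f, hinj, hnorm, horth⟩ := key d hd G hdegen Finset.univ
  refine ⟨f, ?_, fun v => hnorm v (Finset.mem_univ v), ?_⟩
  · intro a b hab
    exact hinj (by simp) (by simp) hab
  · intro u w hadj
    have h := horth u (Finset.mem_univ u) w (Finset.mem_univ w) hadj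
    have hsq : dist (f u) (f w) ^ 2 = 1 := by
      rw [dist_eq_norm, norm_sub_sq_real, h, hnorm u (Finset.mem_univ u),
        hnorm w (Finset.mem_univ w)]
      rw [div_pow, one_pow, Real.sq_sqrt (by norm_num : (2:ℝ) ≥ 0)]
      ring
    have := congrArg Real.sqrt hsq
    rwa [Real.sqrt_sq dist_nonneg, Real.sqrt_one] at this
end

section
/- Let d ≥ 1 and k ≥ 0, and let H be a finite simple graph on d + k vertices. If there exist k pairwise disjoint pairs of vertices of H, each pair non-adjacent in H (i.e. the complement of H has a matching of size k), then H is realizable on the sphere 𝕊^{d−1} of radius 1/√2 in ℝ^d. -/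
theorem stmt_14 {V : Type*} [Fintype V] (d k : ℕ) (hd : 1 ≤ d)
    (H : SimpleGraph V) (hcard : Fintype.card V = d + k)
    -- the complement of `H` has a matching of size `k`: there are `k` pairwise disjoint
    -- pairs of vertices `(a i, b i)`, each pair non-adjacent in `H`
    (hmatching : ∃ a b : Fin k → V,
      Function.Injective (Sum.elim a b : Fin k ⊕ Fin k → V) ∧
      ∀ i : Fin k, ¬ H.Adj (a i) (b i)) :
    SphereRealizable H d := by
  classical
  obtain ⟨a, b, hinj, hnadj⟩ := hmatching
  have ha : Function.Injective a := fun i j h => by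
    have := hinj (a₁ := Sum.inl i) (a₂ := Sum.inl j) (by simpa using h)
    simpa using this
  have hb : Function.Injective b := fun i j h => by
    have := hinj (a₁ := Sum.inr i) (a₂ := Sum.inr j) (by simpa using h)
    simpa using this
  have hab : ∀ i j, a i ≠ b j := fun i j h => by
    have := hinj (a₁ := Sum.inl i) (a₂ := Sum.inr j) (by simpa using h)
    simpa using this
  have hk : k ≤ d := by
    have h1 := Fintype.card_le_of_injective _ hinj
    simp [hcard, Fintype.card_sum] at h1
    omega
  set R : Finset V := Finset.univ \ Finset.image (Sum.elim a b) Finset.univ with hRdef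
  have hmemR : ∀ v : V, (¬∃ i, a i = v) → (¬∃ i, b i = v) → v ∈ R := by
    intro v h1 h2
    simp only [hRdef, Finset.mem_sdiff, Finset.mem_univ, true_and, Finset.mem_image,
      not_exists]
    rintro (i | i) h
    · exact h1 ⟨i, h⟩
    · exact h2 ⟨i, h⟩
  have hRcard : k + R.card = d := by
    have h1 : (Finset.image (Sum.elim a b) Finset.univ).card = k + k := by
      rw [Finset.card_image_of_injective _ hinj]
      simp
    have h2 : R.card = Fintype.card V - (k + k) := by
      rw [hRdef, Finset.card_sdiff_of_subset (Finset.subset_univ _), h1, Finset.card_univ]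
    omega
  -- index function
  set E := R.equivFin with hE
  have hEbd : ∀ (v : V) (hv : v ∈ R), k + (E ⟨v, hv⟩ : ℕ) < d := by
    intro v hv
    have := (E ⟨v, hv⟩).2
    omega
  set c : V → Fin d := fun v =>
    if h : ∃ i, a i = v then Fin.castLE hk h.choose
    else if h' : ∃ i, b i = v then Fin.castLE hk h'.choose
    else ⟨k + (E ⟨v, hmemR v h h'⟩ : ℕ), hEbd v _⟩ with hc
  set s : V → ℝ := fun v => if ∃ i, b i = v then (-1 : ℝ) else 1 with hs
  have hca : ∀ i, c (a i) = Fin.castLE hk i := by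
    intro i
    have h : ∃ j, a j = a i := ⟨i, rfl⟩
    simp only [hc, dif_pos h]
    congr 1
    exact ha h.choose_spec
  have hcb : ∀ i, c (b i) = Fin.castLE hk i := by
    intro i
    have h0 : ¬∃ j, a j = b i := by rintro ⟨j, hj⟩; exact hab j i hj
    have h : ∃ j, b j = b i := ⟨i, rfl⟩
    simp only [hc, dif_neg h0, dif_pos h]
    congr 1
    exact hb h.choose_spec
  have hcr : ∀ (v : V) (h1 : ¬∃ i, a i = v) (h2 : ¬∃ i, b i = v),
      (c v : ℕ) = k + (E ⟨v, hmemR v h1 h2⟩ : ℕ) := by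
    intro v h1 h2
    simp only [hc, dif_neg h1, dif_neg h2]
  have hsa : ∀ i, s (a i) = 1 := by
    intro i
    have h0 : ¬∃ j, b j = a i := by rintro ⟨j, hj⟩; exact hab i j hj.symm
    simp only [hs, if_neg h0]
  have hsb : ∀ i, s (b i) = -1 := by
    intro i
    simp only [hs]
    exact if_pos ⟨i, rfl⟩
  have hspm : ∀ v, s v = 1 ∨ s v = -1 := by
    intro v
    simp only [hs]
    split <;> simp
  -- joint injectivity
  have key : ∀ u v, c u = c v → s u = s v → u = v := by
    intro u v hcuv hsuv
    by_cases hu1 : ∃ i, a i = u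
    · obtain ⟨i, rfl⟩ := hu1
      by_cases hv1 : ∃ j, a j = v
      · obtain ⟨j, rfl⟩ := hv1
        rw [hca, hca] at hcuv
        exact congrArg a (Fin.castLE_injective hk hcuv)
      by_cases hv2 : ∃ j, b j = v
      · obtain ⟨j, rfl⟩ := hv2
        rw [hsa, hsb] at hsuv; norm_num at hsuv
      · have h1 := hcr v hv1 hv2
        have h2 : ((c (a i) : ℕ)) < k := by rw [hca]; exact i.2
        omega
    by_cases hu2 : ∃ i, b i = u
    · obtain ⟨i, rfl⟩ := hu2
      by_cases hv1 : ∃ j, a j = v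
      · obtain ⟨j, rfl⟩ := hv1
        rw [hsb, hsa] at hsuv; norm_num at hsuv
      by_cases hv2 : ∃ j, b j = v
      · obtain ⟨j, rfl⟩ := hv2
        rw [hcb, hcb] at hcuv
        exact congrArg b (Fin.castLE_injective hk hcuv)
      · have h1 := hcr v hv1 hv2
        have h2 : ((c (b i) : ℕ)) < k := by rw [hcb]; exact i.2
        omega
    · by_cases hv1 : ∃ j, a j = v
      · obtain ⟨j, rfl⟩ := hv1
        have h1 := hcr u hu1 hu2
        have h2 : ((c (a j) : ℕ)) < k := by rw [hca]; exact j.2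
        omega
      by_cases hv2 : ∃ j, b j = v
      · obtain ⟨j, rfl⟩ := hv2
        have h1 := hcr u hu1 hu2
        have h2 : ((c (b j) : ℕ)) < k := by rw [hcb]; exact j.2
        omega
      · have h1 := hcr u hu1 hu2
        have h2 := hcr v hv1 hv2
        have h0 : (c u : ℕ) = (c v : ℕ) := by rw [hcuv]
        have h3 : ((E ⟨u, hmemR u hu1 hu2⟩ : Fin R.card) : ℕ) = ((E ⟨v, hmemR v hv1 hv2⟩ : Fin R.card) : ℕ) := by omega
        have h4 := E.injective (Fin.ext h3)
        exact congrArg Subtype.val h4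
  -- adjacency forces distinct indices
  have keyadj : ∀ u v, H.Adj u v → c u ≠ c v := by
    intro u v hadj hcuv
    by_cases hu1 : ∃ i, a i = u
    · obtain ⟨i, rfl⟩ := hu1
      by_cases hv1 : ∃ j, a j = v
      · obtain ⟨j, rfl⟩ := hv1
        rw [hca, hca] at hcuv
        exact H.irrefl (congrArg a (Fin.castLE_injective hk hcuv) ▸ hadj)
      by_cases hv2 : ∃ j, b j = v
      · obtain ⟨j, rfl⟩ := hv2
        rw [hca, hcb] at hcuv
        have : i = j := Fin.castLE_injective hk hcuv
        exact hnadj i (this ▸ hadj)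
      · have h1 := hcr v hv1 hv2
        have h2 : ((c (a i) : ℕ)) < k := by rw [hca]; exact i.2
        omega
    by_cases hu2 : ∃ i, b i = u
    · obtain ⟨i, rfl⟩ := hu2
      by_cases hv1 : ∃ j, a j = v
      · obtain ⟨j, rfl⟩ := hv1
        rw [hcb, hca] at hcuv
        have : i = j := Fin.castLE_injective hk hcuv
        exact hnadj i (this ▸ hadj.symm)
      by_cases hv2 : ∃ j, b j = v
      · obtain ⟨j, rfl⟩ := hv2
        rw [hcb, hcb] at hcuv
        exact H.irrefl (congrArg b (Fin.castLE_injective hk hcuv) ▸ hadj)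
      · have h1 := hcr v hv1 hv2
        have h2 : ((c (b i) : ℕ)) < k := by rw [hcb]; exact i.2
        omega
    · by_cases hv1 : ∃ j, a j = v
      · obtain ⟨j, rfl⟩ := hv1
        have h1 := hcr u hu1 hu2
        have h2 : ((c (a j) : ℕ)) < k := by rw [hca]; exact j.2
        omega
      by_cases hv2 : ∃ j, b j = v
      · obtain ⟨j, rfl⟩ := hv2
        have h1 := hcr u hu1 hu2
        have h2 : ((c (b j) : ℕ)) < k := by rw [hcb]; exact j.2
        omega
      · have h1 := hcr u hu1 hu2
        have h2 := hcr v hv1 hv2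
        have h0 : (c u : ℕ) = (c v : ℕ) := by rw [hcuv]
        have h3 : ((E ⟨u, hmemR u hu1 hu2⟩ : Fin R.card) : ℕ) = ((E ⟨v, hmemR v hv1 hv2⟩ : Fin R.card) : ℕ) := by omega
        have h4 := E.injective (Fin.ext h3)
        exact H.irrefl ((show u = v from congrArg Subtype.val h4) ▸ hadj)
  -- the realization
  have hs2 : (Real.sqrt 2)⁻¹ ≠ 0 := by positivity
  have hinvnn : (0:ℝ) ≤ (Real.sqrt 2)⁻¹ := by positivity
  have hnorm : ∀ v, ‖(s v * (Real.sqrt 2)⁻¹ : ℝ)‖ = (Real.sqrt 2)⁻¹ := by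
    intro v
    rcases hspm v with h' | h' <;> rw [h']
    · rw [one_mul, Real.norm_eq_abs, abs_of_nonneg hinvnn]
    · rw [neg_one_mul, Real.norm_eq_abs, abs_neg, abs_of_nonneg hinvnn]
  refine ⟨fun v => EuclideanSpace.single (c v) (s v * (Real.sqrt 2)⁻¹), ?_, ?_, ?_⟩
  · intro u v h
    have h1 := congrArg (fun x : EuclideanSpace ℝ (Fin d) => x (c u)) h
    simp only [EuclideanSpace.single_apply, if_pos rfl] at h1
    by_cases hcc : c u = c v
    · rw [if_pos hcc] at h1
      have hss : s u = s v := by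
        rw [if_pos trivial] at h1
        exact mul_right_cancel₀ hs2 h1
      exact key u v hcc hss
    · rw [if_neg hcc] at h1
      exfalso
      rcases hspm u with h' | h' <;> rw [h'] at h1 <;> simp [hs2] at h1
  · intro v
    rw [EuclideanSpace.norm_single, hnorm, one_div]
  · intro u v hadj
    have hne := keyadj u v hadj
    have hinner : (inner ℝ (EuclideanSpace.single (c u) (s u * (Real.sqrt 2)⁻¹) : EuclideanSpace ℝ (Fin d))
        (EuclideanSpace.single (c v) (s v * (Real.sqrt 2)⁻¹)) : ℝ) = 0 := by
      rw [EuclideanSpace.inner_single_left, EuclideanSpace.single_apply, if_neg hne]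
      simp
    have hnu : ‖(EuclideanSpace.single (c u) (s u * (Real.sqrt 2)⁻¹) : EuclideanSpace ℝ (Fin d))‖ = (Real.sqrt 2)⁻¹ := by
      rw [EuclideanSpace.norm_single, hnorm]
    have hnv : ‖(EuclideanSpace.single (c v) (s v * (Real.sqrt 2)⁻¹) : EuclideanSpace ℝ (Fin d))‖ = (Real.sqrt 2)⁻¹ := by
      rw [EuclideanSpace.norm_single, hnorm]
    have hsq : dist (EuclideanSpace.single (c u) (s u * (Real.sqrt 2)⁻¹) : EuclideanSpace ℝ (Fin d))
        (EuclideanSpace.single (c v) (s v * (Real.sqrt 2)⁻¹)) ^ 2 = 1 := by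
      have h3 : (Real.sqrt 2) ^ 2 = 2 := Real.sq_sqrt (by norm_num)
      rw [dist_eq_norm, norm_sub_sq_real, hinner, hnu, hnv, inv_pow, h3]
      norm_num
    nlinarith [dist_nonneg (x := (EuclideanSpace.single (c u) (s u * (Real.sqrt 2)⁻¹) : EuclideanSpace ℝ (Fin d)))
      (y := (EuclideanSpace.single (c v) (s v * (Real.sqrt 2)⁻¹) : EuclideanSpace ℝ (Fin d)))]
end

section
/- For every d ≥ 1, the graph K_{d+2} − K_3, obtained from the complete graph on d + 2 vertices by deleting the three edges of one triangle, is not realizable on the sphere 𝕊^{d−1} of radius 1/√2 in ℝ^d. -/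
open scoped RealInnerProductSpace

/-- `K_n − K_3`: the complete graph on `Fin n` with the three edges among the vertices
`0, 1, 2` deleted, i.e. two distinct vertices are adjacent unless both lie in `{0, 1, 2}`. -/
def KminusK3 (n : ℕ) : SimpleGraph (Fin n) where
  Adj u v := u ≠ v ∧ (3 ≤ u.val ∨ 3 ≤ v.val)
  symm := ⟨fun u v h => ⟨h.1.symm, h.2.symm⟩⟩
  loopless := ⟨fun u h => h.1 rfl⟩

theorem stmt_18 (d : ℕ) (hd : 1 ≤ d) :
    ¬ SphereRealizable (KminusK3 (d + 2)) d := by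
  rintro ⟨f, hinj, hnorm, hdist⟩
  have hs2 : Real.sqrt 2 > 0 := by positivity
  have hnormsq : ∀ v, ‖f v‖ ^ 2 = 1 / 2 := by
    intro v
    rw [hnorm]
    rw [div_pow, one_pow, Real.sq_sqrt (by norm_num : (2:ℝ) ≥ 0)]
  -- adjacency implies orthogonality
  have horth : ∀ u v, (KminusK3 (d + 2)).Adj u v → (inner ℝ (f u) (f v) : ℝ) = 0 := by
    intro u v huv
    have h1 : ‖f u - f v‖ = 1 := by
      have := hdist u v huv; rwa [dist_eq_norm] at this
    have h2 : ‖f u - f v‖ ^ 2 = 1 := by rw [h1]; norm_num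
    rw [norm_sub_sq_real, hnormsq, hnormsq] at h2
    linarith
  -- the family of the `d - 1` vertices `3, …, d+1`, rescaled
  set g : Fin (d - 1) → EuclideanSpace ℝ (Fin d) :=
    fun i => Real.sqrt 2 • f ⟨i.val + 3, by omega⟩ with hg
  have hgon : Orthonormal ℝ g := by
    rw [orthonormal_iff_ite]
    intro i j
    by_cases hij : i = j
    · subst hij
      simp only [hg, real_inner_smul_left, real_inner_smul_right, if_pos rfl]
      rw [real_inner_self_eq_norm_sq, hnormsq]
      ring_nf
      rw [Real.sq_sqrt (by norm_num : (2:ℝ) ≥ 0)]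
      norm_num
    · have hadj : (KminusK3 (d + 2)).Adj ⟨i.val + 3, by omega⟩ ⟨j.val + 3, by omega⟩ := by
        show _ ∧ _; constructor
        · intro h
          apply hij
          have : i.val + 3 = j.val + 3 := Fin.mk.inj_iff.mp h
          exact Fin.ext (by omega)
        · left; simp
      simp only [hg, real_inner_smul_left, real_inner_smul_right, if_neg hij,
        horth _ _ hadj, mul_zero]
  -- the span of this family
  set S : Submodule ℝ (EuclideanSpace ℝ (Fin d)) := Submodule.span ℝ (Set.range g) with hS
  have hfrS : Module.finrank ℝ S = d - 1 := by
    rw [hS, finrank_span_eq_card hgon.linearIndependent]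
    simp
  have hfrSo : Module.finrank ℝ Sᗮ = 1 := by
    have := Submodule.finrank_add_finrank_orthogonal (K := S)
    rw [hfrS, finrank_euclideanSpace_fin] at this
    omega
  -- vertices 0, 1, 2 land in `Sᗮ`
  have hmem : ∀ v : Fin (d + 2), v.val < 3 → f v ∈ Sᗮ := by
    intro v hv
    rw [Submodule.mem_orthogonal]
    intro u hu
    induction hu using Submodule.span_induction with
    | mem x hx =>
      obtain ⟨i, rfl⟩ := hx
      have hadj : (KminusK3 (d + 2)).Adj ⟨i.val + 3, by omega⟩ v := by
        show _ ∧ _; constructor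
        · intro h
          have : i.val + 3 = v.val := Fin.mk.inj_iff.mp h
          omega
        · left; simp
      show (inner ℝ (g i) (f v) : ℝ) = 0
      simp only [hg]
      rw [real_inner_smul_left, horth _ _ hadj, mul_zero]
    | zero => simp
    | add x y _ _ hx hy => rw [inner_add_left, hx, hy, add_zero]
    | smul c x _ hx => rw [inner_smul_left, hx, mul_zero]
  -- `Sᗮ` has dimension 1, so every element is a multiple of some `w`
  obtain ⟨w, hw⟩ := finrank_le_one_iff.mp hfrSo.le
  -- the images of 0, 1, 2 in `Sᗮ`
  set x : Fin 3 → Sᗮ := fun i => ⟨f ⟨i.val, by omega⟩, hmem _ i.isLt⟩ with hx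
  choose c hc using fun i => hw (x i)
  have h0 : ∀ i : Fin 3, ‖x i‖ = 1 / Real.sqrt 2 := by
    intro i; rw [Submodule.coe_norm]; exact hnorm _
  have hwne : ‖w‖ ≠ 0 := by
    intro h
    have h1 := h0 0
    rw [← hc 0, norm_smul, h, mul_zero] at h1
    have h2 : (0:ℝ) < 1 / Real.sqrt 2 := by positivity
    linarith
  have habs : ∀ i : Fin 3, |c i| = (1 / Real.sqrt 2) / ‖w‖ := by
    intro i
    have h1 := h0 i
    rw [← hc i, norm_smul, Real.norm_eq_abs] at h1
    rw [eq_div_iff hwne]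
    linarith
  -- pigeonhole among three reals with the same absolute value: two are equal
  have : ∃ i j : Fin 3, i ≠ j ∧ c i = c j := by
    rcases abs_eq_abs.mp ((habs 0).trans (habs 1).symm) with h | h
    · exact ⟨0, 1, by decide, h⟩
    rcases abs_eq_abs.mp ((habs 0).trans (habs 2).symm) with h' | h'
    · exact ⟨0, 2, by decide, h'⟩
    exact ⟨1, 2, by decide, by rw [← neg_eq_iff_eq_neg.mpr h, ← neg_eq_iff_eq_neg.mpr h']⟩
  obtain ⟨i, j, hij, hcij⟩ := this
  have hxeq : x i = x j := by rw [← hc i, ← hc j, hcij]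
  have : f ⟨i.val, by omega⟩ = f ⟨j.val, by omega⟩ := congrArg Subtype.val hxeq
  have := hinj this
  have : i.val = j.val := Fin.mk.inj_iff.mp this
  exact hij (Fin.ext this)
end

section
/- The complete bipartite graph K_{3,3} is not realizable in ℝ^3; that is, there is no injective map f from the six vertices of K_{3,3} to EuclideanSpace ℝ (Fin 3) such that dist (f u) (f v) = 1 for every edge uv of K_{3,3}. -/
set_option maxHeartbeats 1000000

open scoped RealInnerProductSpace

theorem stmt_19 :
    ¬ ∃ f : (Fin 3 ⊕ Fin 3) → EuclideanSpace ℝ (Fin 3),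
      Function.Injective f ∧
      ∀ u v : Fin 3 ⊕ Fin 3, (completeBipartiteGraph (Fin 3) (Fin 3)).Adj u v →
        dist (f u) (f v) = 1 := by
  rintro ⟨f, hinj, hdist⟩
  -- notation
  set a : Fin 3 → EuclideanSpace ℝ (Fin 3) := fun i => f (Sum.inl i) with ha
  set b : Fin 3 → EuclideanSpace ℝ (Fin 3) := fun j => f (Sum.inr j) with hb
  have hd : ∀ i j, ‖a i - b j‖ = 1 := by
    intro i j
    have := hdist (Sum.inl i) (Sum.inr j) (by simp)
    rw [dist_eq_norm] at this
    exact this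
  set u : EuclideanSpace ℝ (Fin 3) := a 1 - a 0 with hu
  set v : EuclideanSpace ℝ (Fin 3) := a 2 - a 0 with hv
  set c : Fin 3 → EuclideanSpace ℝ (Fin 3) := fun j => b j - a 0 with hc
  have hcnorm : ∀ j, ‖c j‖ = 1 := by
    intro j; rw [hc]; simpa [norm_sub_rev] using hd 0 j
  have hcu : ∀ j, ‖c j - u‖ = 1 := by
    intro j
    have : c j - u = -(a 1 - b j) := by show b j - a 0 - (a 1 - a 0) = -(a 1 - b j); abel
    rw [this, norm_neg]; exact hd 1 j
  have hcv : ∀ j, ‖c j - v‖ = 1 := by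
    intro j
    have : c j - v = -(a 2 - b j) := by show b j - a 0 - (a 2 - a 0) = -(a 2 - b j); abel
    rw [this, norm_neg]; exact hd 2 j
  -- inner product relations
  have key : ∀ (x w : EuclideanSpace ℝ (Fin 3)), ‖x‖ = 1 → ‖x - w‖ = 1 → ⟪x, w⟫ = ‖w‖ ^ 2 / 2 := by
    intro x w h1 h2
    have := norm_sub_sq_real x w
    rw [h1, h2] at this
    nlinarith
  have hinnu : ∀ j, ⟪c j, u⟫ = ‖u‖ ^ 2 / 2 := fun j => key _ _ (hcnorm j) (hcu j)
  have hinnv : ∀ j, ⟪c j, v⟫ = ‖v‖ ^ 2 / 2 := fun j => key _ _ (hcnorm j) (hcv j)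
  -- distinctness
  have hane : ∀ i i', i ≠ i' → a i ≠ a i' := by
    intro i i' h he
    exact h (Sum.inl_injective (hinj he))
  have hbne : ∀ j j', j ≠ j' → b j ≠ b j' := by
    intro j j' h he
    exact h (Sum.inr_injective (hinj he))
  have hu0 : u ≠ 0 := sub_ne_zero.2 (hane 1 0 (by decide))
  have hv0 : v ≠ 0 := sub_ne_zero.2 (hane 2 0 (by decide))
  have huv : u ≠ v := fun h => hane 1 2 (by decide) (sub_left_injective h)
  by_cases hdep : ∃ r : ℝ, v = r • u
  · -- collinear case
    obtain ⟨r, hr⟩ := hdep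
    have h1 : ⟪c 0, v⟫ = r * ⟪c 0, u⟫ := by rw [hr, real_inner_smul_right]
    have h2 : ‖v‖ ^ 2 = r ^ 2 * ‖u‖ ^ 2 := by
      rw [hr, norm_smul, mul_pow, Real.norm_eq_abs, sq_abs]
    rw [hinnu, hinnv, h2] at h1
    have hU : ‖u‖ ^ 2 ≠ 0 := pow_ne_zero 2 (norm_ne_zero_iff.2 hu0)
    have h3 : r * (r - 1) * ‖u‖ ^ 2 = 0 := by linear_combination 2 * h1
    rcases mul_eq_zero.mp h3 with h | h
    · rcases mul_eq_zero.mp h with h | h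
      · exact hv0 (by rw [hr, h, zero_smul])
      · exact huv (by rw [hr, show r = 1 by linarith, one_smul])
    · exact hU h
  · -- u, v linearly independent
    push_neg at hdep
    have hindep : LinearIndependent ℝ ![v, u] := by
      rw [linearIndependent_fin2]
      refine ⟨hu0, fun r hr => hdep r ?_⟩
      simp only [Matrix.cons_val_one, Matrix.head_cons, Matrix.cons_val_zero] at hr
      exact hr.symm
    set K : Submodule ℝ (EuclideanSpace ℝ (Fin 3)) := Submodule.span ℝ {v, u} with hK
    have hKrank : Module.finrank ℝ K = 2 := by
      have hr : Set.range ![v, u] = {v, u} := by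
        simp only [Set.ext_iff, Set.mem_range, Set.mem_insert_iff, Set.mem_singleton_iff,
          Fin.exists_fin_two, Matrix.cons_val_zero, Matrix.cons_val_one, Matrix.head_cons]
        intro x; constructor <;> rintro (h | h) <;> simp [h]
      rw [hK, ← hr, finrank_span_eq_card hindep]
      simp
    have hWrank : Module.finrank ℝ Kᗮ = 1 := by
      have := Submodule.finrank_add_finrank_orthogonal K
      rw [hKrank, finrank_euclideanSpace_fin] at this
      omega
    -- both differences lie in Kᗮ
    have hmem : ∀ j, c j - c 0 ∈ Kᗮ := by
      intro j
      rw [Submodule.mem_orthogonal]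
      intro y hy
      rw [hK, Submodule.mem_span_pair] at hy
      obtain ⟨s, t, rfl⟩ := hy
      have h1 : ⟪u, c j - c 0⟫ = 0 := by
        rw [real_inner_comm, inner_sub_left, hinnu, hinnu]; ring
      have h2 : ⟪v, c j - c 0⟫ = 0 := by
        rw [real_inner_comm, inner_sub_left, hinnv, hinnv]; ring
      rw [inner_add_left, real_inner_smul_left, real_inner_smul_left, h1, h2]
      ring
    have hw0 : c 1 - c 0 ≠ 0 := sub_ne_zero.2 (fun h => hbne 1 0 (by decide) (sub_left_injective h))
    have hspan : Submodule.span ℝ {c 1 - c 0} = Kᗮ := by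
      apply Submodule.eq_of_le_of_finrank_eq
      · rw [Submodule.span_le, Set.singleton_subset_iff]; exact hmem 1
      · rw [finrank_span_singleton hw0, hWrank]
    have hmem2 : c 2 - c 0 ∈ Submodule.span ℝ {c 1 - c 0} := hspan ▸ hmem 2
    rw [Submodule.mem_span_singleton] at hmem2
    obtain ⟨s, hs⟩ := hmem2
    -- now c 2 = c 0 + s • (c 1 - c 0), all on the unit sphere
    set w : EuclideanSpace ℝ (Fin 3) := c 1 - c 0 with hw
    have hc1 : c 1 = c 0 + w := by rw [hw]; abel
    have hc2 : c 2 = c 0 + s • w := by rw [hs]; abel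
    have e1 : ‖c 0 + w‖ ^ 2 = ‖c 0‖ ^ 2 + 2 * ⟪c 0, w⟫ + ‖w‖ ^ 2 := norm_add_sq_real _ _
    have e2 : ‖c 0 + s • w‖ ^ 2 = ‖c 0‖ ^ 2 + 2 * (s * ⟪c 0, w⟫) + s ^ 2 * ‖w‖ ^ 2 := by
      rw [norm_add_sq_real, real_inner_smul_right, norm_smul, mul_pow, Real.norm_eq_abs,
        sq_abs]
    rw [← hc1, hcnorm 1, hcnorm 0] at e1
    rw [← hc2, hcnorm 2, hcnorm 0] at e2
    have hwn : ‖w‖ ≠ 0 := norm_ne_zero_iff.2 hw0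
    have hs0 : s ≠ 0 := by
      intro h
      apply hbne 2 0 (by decide)
      have : c 2 = c 0 := by rw [hc2, h, zero_smul, add_zero]
      exact sub_left_injective this
    have hs1 : s ≠ 1 := by
      intro h
      apply hbne 2 1 (by decide)
      have : c 2 = c 1 := by rw [hc2, hc1, h, one_smul]
      exact sub_left_injective this
    -- from e1 : 2⟪c0,w⟫ + ‖w‖² = 0; from e2 : 2s⟪c0,w⟫ + s²‖w‖² = 0
    have hW : ‖w‖ ^ 2 ≠ 0 := pow_ne_zero 2 hwn
    have h1 : 2 * ⟪c 0, w⟫ + ‖w‖ ^ 2 = 0 := by nlinarith [e1]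
    have h2 : 2 * (s * ⟪c 0, w⟫) + s ^ 2 * ‖w‖ ^ 2 = 0 := by nlinarith [e2]
    have h3 : s * (s - 1) * ‖w‖ ^ 2 = 0 := by linear_combination h2 - s * h1
    rcases mul_eq_zero.mp h3 with h | h
    · rcases mul_eq_zero.mp h with h | h
      · exact hs0 h
      · exact hs1 (by linarith)
    · exact hW h
end
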